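/- arXiv:1710.05651 — 10 statements merged into one kernel-verified Lean document; each statement's English description precedes it below -/
import Mathlib

section
/- If a full binary tree with n+1 leaves has exactly r leaves of even depth, then n + r ≡ 1 (mod 3). -/
/-- A full binary tree: each node is a leaf or has exactly two ordered children. -/
inductive BTree where
  | leaf : BTree
  | node : BTree → BTree → BTree

/-- The depth sequence of a full binary tree: the depths of its leaves in
left-to-right (preorder) order. -/
def BTree.depths : BTree → List ℕ
  | .leaf => [0]
  | .node l r => (BTree.depths l ++ BTree.depths r).map (· + 1)

/-- The number of leaves of a full binary tree. -/
def BTree.numLeaves (t : BTree) : ℕ := t.depths.length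

lemma aux_parity (l : List ℕ) :
    (l.filter (fun d => (d + 1) % 2 = 0)).length
      + (l.filter (fun d => d % 2 = 0)).length = l.length := by
  induction l with
  | nil => simp
  | cons a t ih =>
    rcases Nat.even_or_odd a with h | h <;>
      [ have h0 : a % 2 = 0 := Nat.even_iff.mp h;
        have h0 : a % 2 = 1 := Nat.odd_iff.mp h ] <;>
      simp only [List.filter_cons] <;>
      rw [show (decide ((a + 1) % 2 = 0)) = !(decide (a % 2 = 0)) by simp [Nat.add_mod, h0]] <;>
      simp [h0] <;> omega

lemma key (t : BTree) :
    (t.numLeaves + (t.depths.filter (fun d => d % 2 = 0)).length) % 3 = 2 := by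
  induction t with
  | leaf => simp [BTree.numLeaves, BTree.depths]
  | node l r ihl ihr =>
    have hfilt : ((BTree.depths l ++ BTree.depths r).map (· + 1)).filter
        (fun d => d % 2 = 0)
        = ((BTree.depths l ++ BTree.depths r).filter (fun d => (d + 1) % 2 = 0)).map (· + 1) := by
      rw [List.filter_map]
      rfl
    have h1 := aux_parity (BTree.depths l)
    have h2 := aux_parity (BTree.depths r)
    simp only [BTree.numLeaves, BTree.depths, hfilt, List.length_map, List.length_append,
      List.filter_append] at *
    omega

theorem stmt5 (n r : ℕ) (t : BTree) (hleaves : t.numLeaves = n + 1)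
    (hr : (t.depths.filter (fun d => d % 2 = 0)).length = r) :
    (n + r) % 3 = 1 := by
  have := key t
  omega
end

section
/- For every full binary tree t with n+1 leaves where n ≥ 1, there exists an index j with 0 ≤ j ≤ n-1 such that leaves j and j+1 (in left-to-right order) have equal depth. -/
lemma BTree.depths_len_pos (t : BTree) : 1 ≤ t.depths.length := by
  induction t with
  | leaf => simp [BTree.depths]
  | node l r ihl ihr => simp [BTree.depths]; omega

lemma getD_map_append_left (A B : List ℕ) (j : ℕ) (h : j < A.length) :
    ((A ++ B).map (· + 1)).getD j 0 = A.getD j 0 + 1 := by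
  rw [List.getD_eq_getElem?_getD, List.getD_eq_getElem?_getD,
    List.getElem?_map, List.getElem?_append_left h, List.getElem?_eq_getElem h]
  simp

lemma getD_map_append_right (A B : List ℕ) (j : ℕ) (h : j < B.length) :
    ((A ++ B).map (· + 1)).getD (A.length + j) 0 = B.getD j 0 + 1 := by
  rw [List.getD_eq_getElem?_getD, List.getD_eq_getElem?_getD,
    List.getElem?_map]
  rw [List.getElem?_append_right (by omega)]
  have : A.length + j - A.length = j := by omega
  rw [this, List.getElem?_eq_getElem h]
  simp

lemma BTree.adjacent_eq (t : BTree) (h : 2 ≤ t.depths.length) :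
    ∃ j, j + 1 < t.depths.length ∧ t.depths.getD j 0 = t.depths.getD (j + 1) 0 := by
  induction t with
  | leaf => simp [BTree.depths] at h
  | node l r ihl ihr =>
    have hl := l.depths_len_pos
    have hr := r.depths_len_pos
    by_cases h2 : 2 ≤ l.depths.length
    · obtain ⟨j, hj, heq⟩ := ihl h2
      refine ⟨j, ?_, ?_⟩
      · simp [BTree.depths]; omega
      · simp only [BTree.depths]
        rw [getD_map_append_left _ _ _ (by omega), getD_map_append_left _ _ _ (by omega), heq]
    · by_cases h3 : 2 ≤ r.depths.length
      · obtain ⟨j, hj, heq⟩ := ihr h3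
        refine ⟨l.depths.length + j, ?_, ?_⟩
        · simp [BTree.depths]; omega
        · simp only [BTree.depths]
          have h4 : l.depths.length + j + 1 = l.depths.length + (j + 1) := by omega
          rw [getD_map_append_right _ _ _ (by omega), h4,
            getD_map_append_right _ _ _ (by omega), heq]
      · -- both have length 1
        have hl1 : l.depths.length = 1 := by omega
        have hr1 : r.depths.length = 1 := by omega
        refine ⟨0, ?_, ?_⟩
        · simp [BTree.depths]; omega
        · simp only [BTree.depths]
          have h0 : (0 : ℕ) + 1 = l.depths.length + 0 := by omega
          rw [getD_map_append_left _ _ _ (by omega), h0,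
            getD_map_append_right _ _ _ (by omega)]
          obtain ⟨a, ha⟩ := List.length_eq_one_iff.mp hl1
          obtain ⟨b, hb⟩ := List.length_eq_one_iff.mp hr1
          -- depths entries: need a = b. Any length-1 depths is [0].
          have : ∀ t : BTree, t.depths.length = 1 → t.depths = [0] := by
            intro t ht
            cases t with
            | leaf => rfl
            | node x y =>
              have := x.depths_len_pos
              have := y.depths_len_pos
              simp [BTree.depths] at ht
              omega
          rw [this l hl1, this r hr1]

theorem stmt6 (n : ℕ) (hn : 1 ≤ n) (t : BTree) (hleaves : t.numLeaves = n + 1) :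
    ∃ j, j + 1 ≤ n ∧ t.depths.getD j 0 = t.depths.getD (j + 1) 0 := by
  unfold BTree.numLeaves at hleaves
  obtain ⟨j, hj, heq⟩ := t.adjacent_eq (by omega)
  exact ⟨j, by omega, heq⟩
end

section
/- In a full binary tree with at least two leaves, a leftmost leaf of maximal depth has a sibling which is also a leaf, namely the next leaf to its right, and these two leaves have equal depth. -/
lemma depths_pos (t : BTree) : 0 < t.depths.length := by
  induction t with
  | leaf => simp [BTree.depths]
  | node l r ihl ihr => simp [BTree.depths]; omega

lemma one_leaf (t : BTree) (h : t.depths.length = 1) : t.depths = [0] := by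
  cases t with
  | leaf => rfl
  | node l r =>
    exfalso
    have h1 := depths_pos l
    have h2 := depths_pos r
    simp [BTree.depths] at h
    omega

lemma getD_node_left (l r : BTree) (i : ℕ) (hi : i < l.depths.length) :
    (BTree.node l r).depths.getD i 0 = l.depths.getD i 0 + 1 := by
  rw [List.getD_eq_getElem _ _ (by simp [BTree.depths]; omega),
      List.getD_eq_getElem _ _ hi]
  simp only [BTree.depths]
  rw [List.getElem_map, List.getElem_append_left hi]

lemma getD_node_right (l r : BTree) (i : ℕ) (hi : l.depths.length ≤ i)
    (hi2 : i < l.depths.length + r.depths.length) :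
    (BTree.node l r).depths.getD i 0 = r.depths.getD (i - l.depths.length) 0 + 1 := by
  rw [List.getD_eq_getElem _ _ (by simp [BTree.depths]; omega),
      List.getD_eq_getElem _ _ (by omega)]
  simp only [BTree.depths]
  rw [List.getElem_map, List.getElem_append_right hi]


/-- In a full binary tree with at least two leaves, the leftmost leaf of maximal
depth (index `j`) has the next leaf `j+1` as its sibling: in particular `j+1` is a
valid leaf index and leaves `j` and `j+1` have equal depth. -/
theorem stmt7 (t : BTree) (h2 : 2 ≤ t.numLeaves) (j : ℕ) (hj : j < t.numLeaves)
    (hmax : ∀ i < t.numLeaves, t.depths.getD i 0 ≤ t.depths.getD j 0)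
    (hleft : ∀ i < j, t.depths.getD i 0 < t.depths.getD j 0) :
    j + 1 < t.numLeaves ∧ t.depths.getD (j + 1) 0 = t.depths.getD j 0 := by
  induction t generalizing j with
  | leaf => simp [BTree.numLeaves, BTree.depths] at h2
  | node l r ihl ihr =>
    have hLpos := depths_pos l
    have hRpos := depths_pos r
    have hlen : (BTree.node l r).numLeaves = l.depths.length + r.depths.length := by
      simp [BTree.numLeaves, BTree.depths]
    rw [hlen] at hj hmax ⊢
    by_cases hjl : j < l.depths.length
    · -- j in left subtree
      rcases Nat.lt_or_ge 1 l.depths.length with hL2 | hL1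
      · -- left subtree has ≥ 2 leaves: use IH
        have hmax' : ∀ i < l.numLeaves, l.depths.getD i 0 ≤ l.depths.getD j 0 := by
          intro i hi
          have := hmax i (by simp [BTree.numLeaves] at hi ⊢; omega)
          rwa [getD_node_left l r i (by simpa [BTree.numLeaves] using hi),
               getD_node_left l r j hjl, Nat.add_le_add_iff_right] at this
        have hleft' : ∀ i < j, l.depths.getD i 0 < l.depths.getD j 0 := by
          intro i hi
          have := hleft i hi
          rwa [getD_node_left l r i (by omega), getD_node_left l r j hjl,
               Nat.add_lt_add_iff_right] at this
        obtain ⟨hb, he⟩ := ihl (by simp [BTree.numLeaves]; omega) j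
          (by simpa [BTree.numLeaves] using hjl) hmax' hleft'
        simp [BTree.numLeaves] at hb
        refine ⟨by omega, ?_⟩
        rw [getD_node_left l r (j+1) hb, getD_node_left l r j hjl, he]
      · -- left subtree is a single leaf
        have hL : l.depths.length = 1 := by omega
        have hj0 : j = 0 := by omega
        have hL0 : l.depths = [0] := one_leaf l hL
        subst hj0
        refine ⟨by omega, ?_⟩
        have := hmax 1 (by omega)
        rw [getD_node_right l r 1 (by omega) (by omega),
            getD_node_left l r 0 hjl, hL0] at this ⊢
        simp [hL] at this ⊢
        omega
    · -- j in right subtree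
      push_neg at hjl
      set j' := j - l.depths.length with hj'
      have hj'lt : j' < r.depths.length := by omega
      rcases Nat.lt_or_ge 1 r.depths.length with hR2 | hR1
      · have hmax' : ∀ i < r.numLeaves, r.depths.getD i 0 ≤ r.depths.getD j' 0 := by
          intro i hi
          simp [BTree.numLeaves] at hi
          have := hmax (l.depths.length + i) (by omega)
          rwa [getD_node_right l r _ (by omega) (by omega),
               getD_node_right l r j hjl (by omega),
               Nat.add_sub_cancel_left, Nat.add_le_add_iff_right] at this
        have hleft' : ∀ i < j', r.depths.getD i 0 < r.depths.getD j' 0 := by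
          intro i hi
          have := hleft (l.depths.length + i) (by omega)
          rwa [getD_node_right l r _ (by omega) (by omega),
               getD_node_right l r j hjl (by omega),
               Nat.add_sub_cancel_left, Nat.add_lt_add_iff_right] at this
        obtain ⟨hb, he⟩ := ihr (by simp [BTree.numLeaves]; omega) j'
          (by simpa [BTree.numLeaves] using hj'lt) hmax' hleft'
        simp [BTree.numLeaves] at hb
        refine ⟨by omega, ?_⟩
        rw [getD_node_right l r (j+1) (by omega) (by omega),
            getD_node_right l r j hjl (by omega)]
        have : j + 1 - l.depths.length = j' + 1 := by omega
        rw [this, he]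
      · -- right subtree is a single leaf: contradiction
        exfalso
        have hR : r.depths.length = 1 := by omega
        have hR0 : r.depths = [0] := one_leaf r hR
        have hjv : j = l.depths.length := by omega
        have h0 := hleft 0 (by omega)
        rw [getD_node_left l r 0 (by omega),
            getD_node_right l r j hjl (by omega), hR0] at h0
        simp [hjv] at h0
end

section
/- Let n ≥ 0 and let (d_0,...,d_n) ∈ {0,1}^{n+1} be admissible, meaning: (i) if n ≥ 1 then d_j = d_{j+1} for some 0 ≤ j ≤ n-1, and (ii) n + #{i : d_i = 0} ≡ 1 (mod 3). Then there exists a full binary tree t with n+1 leaves such that the depth of leaf i is congruent to d_i modulo 2 for every i. -/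
/-- A binary sequence `(d_0,...,d_n)` (encoded as `v : Fin (n+1) → Fin 2`) is
admissible if it is non-alternating (when `n ≥ 1`, two consecutive entries agree)
and `n + #{i : d_i = 0} ≡ 1 (mod 3)`. -/
def AdmissibleSeq {n : ℕ} (v : Fin (n + 1) → Fin 2) : Prop :=
  (1 ≤ n → ∃ j : Fin n, v j.castSucc = v j.succ) ∧
  (n + (Finset.univ.filter (fun i => v i = 0)).card) % 3 = 1

/-- A list of parities is good if it is realized by some full binary tree. -/
def GoodP (l : List ℕ) : Prop := ∃ t : BTree, t.depths.map (· % 2) = l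

/-- A list has an adjacent equal pair. -/
def HasPair (l : List ℕ) : Prop := ∃ u a w, l = u ++ a :: a :: w

lemma HasPair.two_le {l : List ℕ} (h : HasPair l) : 2 ≤ l.length := by
  obtain ⟨u, a, w, rfl⟩ := h; simp; omega

lemma map_flip_flip (X : List ℕ) (hX : ∀ x ∈ X, x ≤ 1) :
    (X.map (fun y => 1 - y)).map (fun y => 1 - y) = X := by
  rw [List.map_map]
  conv_rhs => rw [← List.map_id X]
  refine List.map_congr_left fun a ha => ?_
  have := hX a ha
  simp only [Function.comp_apply, List.map_id, id_eq]
  omega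

lemma mem_flip_le {X : List ℕ} : ∀ x ∈ X.map (fun y => 1 - y), x ≤ 1 := by
  intro x hx
  simp only [List.mem_map] at hx
  obtain ⟨y, _, rfl⟩ := hx
  omega

lemma flip_decomp {X u w : List ℕ} {b : ℕ} (hX : ∀ x ∈ X, x ≤ 1)
    (h : X.map (fun y => 1 - y) = u ++ b :: w) :
    b ≤ 1 ∧ X = u.map (fun y => 1 - y) ++ (1 - b) :: w.map (fun y => 1 - y) := by
  constructor
  · have hb : b ∈ X.map (fun y => 1 - y) := by rw [h]; simp
    exact mem_flip_le b hb
  · have h2 := congrArg (List.map (fun y : ℕ => 1 - y)) h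
    rw [map_flip_flip X hX] at h2
    simpa using h2

lemma parity_le_one (t : BTree) : ∀ x ∈ t.depths.map (· % 2), x ≤ 1 := by
  intro x hx
  simp only [List.mem_map] at hx
  obtain ⟨y, _, rfl⟩ := hx
  omega

lemma node_parity (l r : BTree) :
    (BTree.node l r).depths.map (· % 2)
      = ((l.depths.map (· % 2)) ++ (r.depths.map (· % 2))).map (fun y => 1 - y) := by
  simp only [BTree.depths, List.map_append, List.map_map]
  congr 1 <;> exact List.map_congr_left (fun a _ => by simp only [Function.comp_apply]; omega)

lemma splitAux : ∀ (t : BTree) (u : List ℕ) (b : ℕ) (w : List ℕ),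
    t.depths.map (· % 2) = u ++ b :: w →
    ∃ t' : BTree, t'.depths.map (· % 2) = u ++ (1 - b) :: (1 - b) :: w := by
  intro t
  induction t with
  | leaf =>
    intro u b w h
    simp only [BTree.depths, List.map_cons, List.map_nil, Nat.zero_mod] at h
    have hu : u = [] ∧ b = 0 ∧ w = [] := by
      cases u with
      | nil => simp_all
      | cons c u' =>
        simp only [List.cons_append] at h
        have := congrArg List.length h
        simp at this
    obtain ⟨rfl, rfl, rfl⟩ := hu
    exact ⟨.node .leaf .leaf, by simp [BTree.depths]⟩
  | node l r ihl ihr =>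
    intro u b w h
    rw [node_parity, List.map_append] at h
    set A := l.depths.map (· % 2) with hA
    set B := r.depths.map (· % 2) with hB
    have hAle : ∀ x ∈ A, x ≤ 1 := parity_le_one l
    have hBle : ∀ x ∈ B, x ≤ 1 := parity_le_one r
    rcases List.append_eq_append_iff.mp h with ⟨u₂, hu, hBd⟩ | ⟨c', hAd, hcd⟩
    · -- the marked entry b lies in the right subtree's block
      obtain ⟨hble, hBdec⟩ := flip_decomp hBle hBd
      obtain ⟨r', hr'⟩ := ihr _ _ _ hBdec
      have hbb : 1 - (1 - b) = b := by omega
      rw [hbb] at hr'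
      refine ⟨.node l r', ?_⟩
      rw [node_parity, ← hA, hr']
      have hu₂le : ∀ x ∈ u₂, x ≤ 1 := fun x hx => mem_flip_le x (hBd ▸ List.mem_append_left _ hx)
      have hwle : ∀ x ∈ w, x ≤ 1 := fun x hx =>
        mem_flip_le x (hBd ▸ List.mem_append_right _ (List.mem_cons_of_mem _ hx))
      simp only [List.map_append, List.map_cons]
      rw [map_flip_flip u₂ hu₂le, map_flip_flip w hwle, hu]
      simp
    · -- b lies in the left block, or exactly at the boundary (c' = [])
      cases c' with
      | nil =>
        simp only [List.append_nil] at hAd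
        have hBd : B.map (fun y => 1 - y) = [] ++ b :: w := by simpa using hcd.symm
        obtain ⟨hble, hBdec⟩ := flip_decomp hBle hBd
        obtain ⟨r', hr'⟩ := ihr _ _ _ hBdec
        have hbb : 1 - (1 - b) = b := by omega
        rw [hbb] at hr'
        refine ⟨.node l r', ?_⟩
        rw [node_parity, ← hA, hr']
        have hwle : ∀ x ∈ w, x ≤ 1 := fun x hx =>
          mem_flip_le x (hBd ▸ List.mem_append_right _ (List.mem_cons_of_mem _ hx))
        simp only [List.map_append, List.map_cons, List.nil_append, List.map_nil]
        rw [map_flip_flip w hwle, hAd]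
      | cons c w₁ =>
        simp only [List.cons_append] at hcd
        injection hcd with h1 h2
        subst h1
        obtain ⟨hble, hAdec⟩ := flip_decomp hAle hAd
        obtain ⟨l', hl'⟩ := ihl _ _ _ hAdec
        have hbb : 1 - (1 - b) = b := by omega
        rw [hbb] at hl'
        refine ⟨.node l' r, ?_⟩
        rw [node_parity, ← hB, hl']
        have hule : ∀ x ∈ u, x ≤ 1 := fun x hx => mem_flip_le x (hAd ▸ List.mem_append_left _ hx)
        have hw₁le : ∀ x ∈ w₁, x ≤ 1 := fun x hx =>
          mem_flip_le x (hAd ▸ List.mem_append_right _ (List.mem_cons_of_mem _ hx))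
        simp only [List.map_append, List.map_cons]
        rw [map_flip_flip u hule, map_flip_flip w₁ hw₁le, h2]
        simp

lemma findPattern : ∀ (l : List ℕ), HasPair l →
    (∃ u x a w, x ≠ a ∧ l = u ++ x :: a :: a :: w) ∨
    (∃ u a x w, x ≠ a ∧ l = u ++ a :: a :: x :: w) ∨
    (∃ a, l = List.replicate l.length a) := by
  intro l
  induction l with
  | nil => exact fun _ => Or.inr (Or.inr ⟨0, rfl⟩)
  | cons c t ih =>
    intro hp
    by_cases hconst : ∃ a, (c :: t) = List.replicate (c :: t).length a
    · exact Or.inr (Or.inr hconst)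
    by_cases hpt : HasPair t
    · by_cases htc : ∃ a, t = List.replicate t.length a
      · obtain ⟨a, hta⟩ := htc
        have h2 : 2 ≤ t.length := hpt.two_le
        obtain ⟨m, hm⟩ : ∃ m, t.length = m + 2 := ⟨t.length - 2, by omega⟩
        have hca : c ≠ a := by
          intro hca
          subst hca
          refine hconst ⟨c, ?_⟩
          conv_lhs => rw [hta]
          simp [List.length_cons, List.replicate_succ]
        refine Or.inl ⟨[], c, a, List.replicate m a, hca, ?_⟩
        rw [hta, hm]
        simp [List.replicate_succ]
      · rcases ih hpt with ⟨u, x, a, w, hne, he⟩ | ⟨u, a, x, w, hne, he⟩ | hrep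
        · exact Or.inl ⟨c :: u, x, a, w, hne, by rw [he]; rfl⟩
        · exact Or.inr (Or.inl ⟨c :: u, a, x, w, hne, by rw [he]; rfl⟩)
        · exact absurd hrep htc
    · obtain ⟨u, a, w, he⟩ := hp
      cases u with
      | nil =>
        simp only [List.nil_append] at he
        injection he with h1 h2
        subst h1
        cases w with
        | nil =>
          exact absurd ⟨c, by rw [h2]; rfl⟩ hconst
        | cons x w' =>
          by_cases hxc : x = c
          · exact absurd ⟨[], c, w', by rw [h2, hxc]; rfl⟩ hpt
          · exact Or.inr (Or.inl ⟨[], c, x, w', hxc, by rw [h2]; rfl⟩)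
      | cons c' u' =>
        simp only [List.cons_append] at he
        injection he with h1 h2
        exact absurd ⟨u', a, w, h2⟩ hpt

lemma mod_inv (u w : List ℕ) (b : ℕ) (hb : b ≤ 1) :
    ((u ++ (1 - b) :: (1 - b) :: w).length + (u ++ (1 - b) :: (1 - b) :: w).count 0) % 3
      = ((u ++ b :: w).length + (u ++ b :: w).count 0) % 3 := by
  interval_cases b <;>
    simp [List.count_append, List.count_cons, List.length_append] <;> omega

lemma reduceStep (l : List ℕ) (hl : ∀ x ∈ l, x ≤ 1) (hp : HasPair l)
    (h3 : 3 ≤ l.length) (hmod : (l.length + l.count 0) % 3 = 2) :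
    ∃ U b W, b ≤ 1 ∧ l = U ++ (1 - b) :: (1 - b) :: W ∧ HasPair (U ++ b :: W) := by
  rcases findPattern l hp with ⟨u, x, a, w, hne, rfl⟩ | ⟨u, a, x, w, hne, rfl⟩ | ⟨a, hrep⟩
  · have hx : x ≤ 1 := hl x (by simp)
    have ha : a ≤ 1 := hl a (by simp)
    have hax : a = 1 - x := by omega
    exact ⟨u ++ [x], x, w, hx, by simp [hax], ⟨u, x, w, by simp⟩⟩
  · have hx : x ≤ 1 := hl x (by simp)
    have ha : a ≤ 1 := hl a (by simp)
    have hax : a = 1 - x := by omega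
    exact ⟨u, x, x :: w, hx, by simp [hax], ⟨u, x, w, by simp⟩⟩
  · obtain ⟨L, hL⟩ : ∃ L, l.length = L := ⟨_, rfl⟩
    rw [hL] at hrep
    subst hrep
    simp only [List.length_replicate] at h3 hmod
    have ha : a ≤ 1 := hl a (List.mem_replicate.mpr ⟨by omega, rfl⟩)
    have hcnt : (List.replicate L a).count 0 = if a = 0 then L else 0 := by
      rw [List.count_replicate]
      by_cases h : a = 0 <;> simp [h]
    rw [hcnt] at hmod
    have hL4 : 4 ≤ L := by
      by_cases h : a = 0 <;> simp [h] at hmod <;> omega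
    obtain ⟨m, hm⟩ : ∃ m, L = m + 4 := ⟨L - 4, by omega⟩
    subst hm
    refine ⟨[], 1 - a, List.replicate (m + 2) a, by omega, ?_, ?_⟩
    · have haa : 1 - (1 - a) = a := by omega
      rw [haa]
      simp [show m + 4 = (m + 2) + 1 + 1 from rfl, List.replicate_succ]
    · exact ⟨[1 - a], a, List.replicate m a,
        by simp [show m + 2 = m + 1 + 1 from rfl, List.replicate_succ]⟩

lemma goodOfAdm : ∀ (m : ℕ) (l : List ℕ), l.length ≤ m → (∀ x ∈ l, x ≤ 1) → l ≠ [] →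
    (l.length + l.count 0) % 3 = 2 → (2 ≤ l.length → HasPair l) → GoodP l := by
  intro m
  induction m with
  | zero =>
    intro l h1 _ hne _ _
    exact absurd (List.length_eq_zero_iff.mp (by omega)) hne
  | succ m ih =>
    intro l hlen hle hne hmod hpair
    rcases lt_or_ge l.length 3 with hsmall | hbig
    · have h1 : l.length = 1 ∨ l.length = 2 := by
        have : l.length ≠ 0 := fun h => hne (List.length_eq_zero_iff.mp h)
        omega
      rcases h1 with h1 | h1
      · obtain ⟨x, rfl⟩ := List.length_eq_one_iff.mp h1
        have hx0 : x = 0 := by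
          have hx1 : x ≤ 1 := hle x (by simp)
          simp only [List.length_cons, List.length_nil, List.count_cons, List.count_nil] at hmod
          interval_cases x
          · rfl
          · simp at hmod
        subst hx0
        exact ⟨.leaf, by simp [BTree.depths]⟩
      · obtain ⟨u, a, w, rfl⟩ := hpair (by omega)
        have hu : u = [] ∧ w = [] := by
          simp only [List.length_append, List.length_cons] at h1
          constructor <;> [exact List.length_eq_zero_iff.mp (by omega);
            exact List.length_eq_zero_iff.mp (by omega)]
        obtain ⟨rfl, rfl⟩ := hu
        have ha : a ≤ 1 := hle a (by simp)
        have ha1 : a = 1 := by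
          simp only [List.nil_append, List.length_cons, List.length_nil,
            List.count_cons, List.count_nil] at hmod
          interval_cases a
          · simp at hmod
          · rfl
        subst ha1
        exact ⟨.node .leaf .leaf, by simp [BTree.depths]⟩
    · obtain ⟨U, b, W, hb, hl, hps⟩ := reduceStep l hle (hpair (by omega)) hbig hmod
      have hsle : ∀ x ∈ U ++ b :: W, x ≤ 1 := by
        intro x hx
        rcases List.mem_append.mp hx with hx | hx
        · exact hle x (hl ▸ List.mem_append_left _ hx)
        · rcases List.mem_cons.mp hx with rfl | hx
          · exact hb
          · exact hle x (hl ▸ List.mem_append_right _ (by simp [hx]))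
      have hslen : (U ++ b :: W).length ≤ m := by
        have h1 := congrArg List.length hl
        simp only [List.length_append, List.length_cons] at h1 ⊢
        omega
      have hsmod : ((U ++ b :: W).length + (U ++ b :: W).count 0) % 3 = 2 := by
        rw [← mod_inv U W b hb, ← hl]
        exact hmod
      obtain ⟨t, ht⟩ := ih (U ++ b :: W) hslen hsle (by simp) hsmod (fun _ => hps)
      obtain ⟨t', ht'⟩ := splitAux t U b W ht
      exact ⟨t', by rw [ht', ← hl]⟩

theorem stmt8 (n : ℕ) (v : Fin (n + 1) → Fin 2) (hv : AdmissibleSeq v) :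
    ∃ t : BTree, t.numLeaves = n + 1 ∧
      ∀ i : Fin (n + 1), t.depths.getD i 0 % 2 = (v i : ℕ) := by
  obtain ⟨hpairv, hmodv⟩ := hv
  have hlen : (List.ofFn fun i => ((v i : ℕ))).length = n + 1 := by simp
  have hle : ∀ x ∈ (List.ofFn fun i => ((v i : ℕ))), x ≤ 1 := by
    intro x hx
    rw [List.mem_ofFn] at hx
    obtain ⟨i, hi⟩ := hx
    rw [← hi]
    exact Nat.lt_succ_iff.mp (v i).isLt
  have hcount : (List.ofFn fun i => ((v i : ℕ))).count 0
      = (Finset.univ.filter (fun i => v i = 0)).card := by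
    have h1 : (Finset.univ.filter (fun i => v i = 0)).card
        = (List.finRange (n + 1)).countP (fun i => decide (v i = 0)) := by
      rw [Fin.univ_def]
      simp [Finset.filter, Finset.card, List.countP_eq_length_filter, Multiset.filter_coe]
    rw [h1, List.ofFn_eq_map, List.count, List.countP_map]
    refine List.countP_congr fun i _ => ?_
    simp only [Function.comp_apply, beq_iff_eq, decide_eq_true_eq, Fin.ext_iff, Fin.val_zero]
  have hmod2 : ((List.ofFn fun i => ((v i : ℕ))).length
      + (List.ofFn fun i => ((v i : ℕ))).count 0) % 3 = 2 := by
    rw [hlen, hcount]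
    omega
  have hpair : 2 ≤ (List.ofFn fun i => ((v i : ℕ))).length
      → HasPair (List.ofFn fun i => ((v i : ℕ))) := by
    intro h2
    rw [hlen] at h2
    obtain ⟨j, hj⟩ := hpairv (by omega)
    have hj1 : (j : ℕ) + 1 < (List.ofFn fun i => ((v i : ℕ))).length := by
      rw [hlen]
      have := j.isLt
      omega
    have hj0 : (j : ℕ) < (List.ofFn fun i => ((v i : ℕ))).length := by omega
    have hval : (List.ofFn fun i => ((v i : ℕ)))[(j : ℕ) + 1]'hj1
        = (List.ofFn fun i => ((v i : ℕ)))[(j : ℕ)]'hj0 := by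
      rw [List.getElem_ofFn, List.getElem_ofFn]
      exact (congrArg Fin.val hj).symm
    refine ⟨List.take (j : ℕ) (List.ofFn fun i => ((v i : ℕ))),
      (List.ofFn fun i => ((v i : ℕ)))[(j : ℕ)]'hj0,
      List.drop ((j : ℕ) + 2) (List.ofFn fun i => ((v i : ℕ))), ?_⟩
    conv_lhs => rw [← List.take_append_drop (j : ℕ) (List.ofFn fun i => ((v i : ℕ)))]
    rw [List.drop_eq_getElem_cons hj0, List.drop_eq_getElem_cons hj1, hval]
  obtain ⟨t, ht⟩ := goodOfAdm (n + 1) (List.ofFn fun i => ((v i : ℕ))) (by omega) hle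
    (by intro h; rw [h] at hlen; simp at hlen) hmod2 hpair
  have htlen : t.depths.length = n + 1 := by
    have h := congrArg List.length ht
    rw [List.length_map, hlen] at h
    exact h
  refine ⟨t, htlen, ?_⟩
  intro i
  have hi : (i : ℕ) < t.depths.length := by rw [htlen]; exact i.isLt
  rw [List.getD_eq_getElem _ _ hi]
  have hmapi : (t.depths.map (· % 2))[(i : ℕ)]'(by simpa using hi) = t.depths[(i : ℕ)] % 2 :=
    List.getElem_map _
  have hli : (List.ofFn fun i => ((v i : ℕ)))[(i : ℕ)]'(by rw [hlen]; exact i.isLt)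
      = (v i : ℕ) := by
    rw [List.getElem_ofFn]
  rw [← hli, ← hmapi]
  exact List.getElem_of_eq ht _
end

section
/- Every parenthesization of x_0 ⊖ x_1 ⊖ ⋯ ⊖ x_n, where a ⊖ b = -a - b, evaluates to Σ_{i=0}^{n} (-1)^{d_i(t)} x_i, where t is the full binary tree with n+1 leaves corresponding to the parenthesization and d_i(t) is the depth of leaf i in t. -/
/-- Evaluate the parenthesization of `x_k ⊖ ⋯ ⊖ x_{k+m}` corresponding to a full
binary tree with `m+1` leaves, where `a ⊖ b := -a - b` and leaves are the
variables read left to right starting from index `k`. -/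
def BTree.eval (x : ℕ → ℤ) : BTree → ℕ → ℤ
  | .leaf, k => x k
  | .node l r, k => -(BTree.eval x l k) - BTree.eval x r (k + l.numLeaves)

lemma aux9 (x : ℕ → ℤ) (t : BTree) (k : ℕ) :
    t.eval x k = ∑ i ∈ Finset.range t.numLeaves, (-1) ^ t.depths.getD i 0 * x (k + i) := by
  induction t generalizing k with
  | leaf => simp [BTree.eval, BTree.numLeaves, BTree.depths]
  | node l r ihl ihr =>
    have hl : l.numLeaves = l.depths.length := rfl
    have hr : r.numLeaves = r.depths.length := rfl
    rw [BTree.eval, ihl, ihr]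
    have hlen : (BTree.node l r).numLeaves = l.numLeaves + r.numLeaves := by
      simp [BTree.numLeaves, BTree.depths]
    rw [hlen, Finset.sum_range_add]
    have key : ∀ i < (l.depths ++ r.depths).length,
        (BTree.node l r).depths.getD i 0 = (l.depths ++ r.depths).getD i 0 + 1 := by
      intro i hi
      simp only [BTree.depths]
      rw [List.getD_eq_getElem _ _ (by simpa using hi), List.getD_eq_getElem _ _ hi,
        List.getElem_map]
    have e1 : ∀ i ∈ Finset.range l.numLeaves,
        (-1:ℤ) ^ (BTree.node l r).depths.getD i 0 * x (k + i)
        = -((-1) ^ l.depths.getD i 0 * x (k + i)) := by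
      intro i hi
      simp only [Finset.mem_range] at hi
      rw [key i (by simp [List.length_append]; omega)]
      rw [List.getD_append _ _ _ _ (by omega)]
      ring
    have e2 : ∀ i ∈ Finset.range r.numLeaves,
        (-1:ℤ) ^ (BTree.node l r).depths.getD (l.numLeaves + i) 0 * x (k + (l.numLeaves + i))
        = -((-1) ^ r.depths.getD i 0 * x (k + l.numLeaves + i)) := by
      intro i hi
      simp only [Finset.mem_range] at hi
      rw [key _ (by simp [List.length_append]; omega)]
      have : (l.depths ++ r.depths).getD (l.numLeaves + i) 0 = r.depths.getD i 0 := by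
        rw [hl, List.getD_append_right _ _ _ _ (by omega)]
        congr 1; omega
      rw [this]
      have : k + (l.numLeaves + i) = k + l.numLeaves + i := by omega
      rw [this]; ring
    rw [Finset.sum_congr rfl e1, Finset.sum_congr rfl e2, Finset.sum_neg_distrib,
      Finset.sum_neg_distrib]
    ring

theorem stmt9 (t : BTree) (x : ℕ → ℤ) :
    t.eval x 0 = ∑ i ∈ Finset.range t.numLeaves, (-1) ^ t.depths.getD i 0 * x i := by
  simpa using aux9 x t 0
end

section
/- For n ≥ 1 and 0 ≤ r ≤ n+1, the number of sign vectors (ε_0,...,ε_n) ∈ {+1,-1}^{n+1} with exactly r entries equal to +1 that arise as the coefficient vector of some parenthesization of x_0 ⊖ ⋯ ⊖ x_n equals: C(n+1, r) if n + r ≡ 1 (mod 3) and n ≠ 2r - 2; C(n+1, r) - 1 if n + r ≡ 1 (mod 3) and n = 2r - 2; and 0 if n + r ≢ 1 (mod 3). -/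
/-- sign list of a tree -/
def sgns : BTree → List ℤ
  | .leaf => [1]
  | .node l r => (sgns l ++ sgns r).map (fun x => -x)

lemma sum_map_neg' (L : List ℤ) : (L.map (fun x => -x)).sum = -L.sum := by
  induction L with
  | nil => simp
  | cons a l ih => simp [ih]; ring

lemma sgns_eq (t : BTree) : sgns t = t.depths.map (fun d => (-1 : ℤ) ^ d) := by
  induction t with
  | leaf => simp [sgns, BTree.depths]
  | node l r ihl ihr =>
    simp only [sgns, BTree.depths, ihl, ihr, List.map_map, List.map_append]
    congr 1 <;> (apply List.map_congr_left; intro d _; simp [pow_succ])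

lemma length_sgns (t : BTree) : (sgns t).length = t.numLeaves := by
  rw [sgns_eq, BTree.numLeaves, List.length_map]

lemma one_le_length_sgns (t : BTree) : 1 ≤ (sgns t).length := by
  induction t with
  | leaf => simp [sgns]
  | node l r ihl ihr => simp [sgns]; omega

lemma mem_sgns {t : BTree} {x : ℤ} (hx : x ∈ sgns t) : x = 1 ∨ x = -1 := by
  induction t generalizing x with
  | leaf => simp [sgns] at hx; left; exact hx
  | node l r ihl ihr =>
    simp only [sgns, List.mem_map, List.mem_append] at hx
    obtain ⟨y, hy, rfl⟩ := hx
    rcases hy with hy | hy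
    · rcases ihl hy with h | h <;> simp [h]
    · rcases ihr hy with h | h <;> simp [h]

lemma sum_sgns (t : BTree) : (((sgns t).sum : ℤ) : ZMod 3) = 1 := by
  induction t with
  | leaf => simp [sgns]
  | node l r ihl ihr =>
    have h : (sgns (BTree.node l r)).sum = -((sgns l).sum + (sgns r).sum) := by
      show ((sgns l ++ sgns r).map (fun x => -x)).sum = _
      rw [sum_map_neg', List.sum_append]
    rw [h, Int.cast_neg, Int.cast_add, ihl, ihr]; decide

def alt (m : ℕ) : List ℤ := List.ofFn (fun i : Fin m => (-1) ^ (i : ℕ))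

lemma length_alt (m : ℕ) : (alt m).length = m := by simp [alt]

lemma getElem_alt {m i : ℕ} (h : i < (alt m).length) : (alt m)[i] = (-1) ^ i := by
  simp [alt, List.getElem_ofFn]

lemma alt_succ (m : ℕ) : alt (m + 1) = 1 :: (alt m).map (fun x => -x) := by
  rw [alt, List.ofFn_succ, alt, List.map_ofFn]
  simp only [Fin.val_zero, pow_zero, Function.comp]
  refine congrArg _ (congrArg List.ofFn (funext fun i => ?_))
  simp [pow_succ, mul_comm]

lemma sum_alt (m : ℕ) : (alt m).sum = if Even m then 0 else 1 := by
  induction m with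
  | zero => simp [alt]
  | succ k ih =>
    rw [alt_succ, List.sum_cons]
    have : ((alt k).map (fun x => -x)).sum = -(alt k).sum := by
      induction (alt k) with
      | nil => simp
      | cons a l ih2 => simp_all; ring
    rw [this, ih]
    rcases Nat.even_or_odd k with h | h
    · simp [h, Nat.even_add_one]
    · have hk : ¬ Even k := Nat.not_even_iff_odd.mpr h
      simp [hk, Nat.even_add_one]

lemma take_alt {k m : ℕ} (h : k ≤ m) : (alt m).take k = alt k := by
  apply List.ext_getElem
  · simp [length_alt, h]
  · intro i h1 h2
    rw [List.getElem_take, getElem_alt, getElem_alt]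

lemma sum_alt_cast (m : ℕ) :
    (((alt m).sum : ℤ) : ZMod 3) = 0 ∨ (((alt m).sum : ℤ) : ZMod 3) = 1 := by
  rw [sum_alt]; split <;> simp

def GoodL (l : List ℤ) : Prop :=
  (∀ x ∈ l, x = 1 ∨ x = -1) ∧ (((l.sum : ℤ) : ZMod 3) = 1) ∧
    (l.length = 1 ∨ l ≠ alt l.length)

lemma neg_neg_map (l : List ℤ) : (l.map (fun x => -x)).map (fun x => -x) = l := by
  rw [List.map_map]; simp

lemma cast_sum_map_neg (l : List ℤ) :
    (((l.map (fun x => -x)).sum : ℤ) : ZMod 3) = -((l.sum : ℤ) : ZMod 3) := by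
  rw [sum_map_neg']; push_cast; ring

lemma sgns_good (t : BTree) : GoodL (sgns t) := by
  refine ⟨fun x hx => mem_sgns hx, sum_sgns t, ?_⟩
  cases t with
  | leaf => left; rfl
  | node l r =>
    right
    intro h
    -- sgns l is the negation of a prefix of alt
    have hmap : sgns l ++ sgns r = (alt (sgns (BTree.node l r)).length).map (fun x => -x) := by
      rw [← h]; exact (neg_neg_map _).symm
    have hk : (sgns l).length ≤ (alt (sgns (BTree.node l r)).length).length := by
      rw [length_alt]
      show _ ≤ ((sgns l ++ sgns r).map _).length
      simp
    have htake : sgns l = ((alt (sgns (BTree.node l r)).length).map (fun x => -x)).take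
        (sgns l).length := by
      rw [← hmap, List.take_left]
    rw [← List.map_take, take_alt (by simpa [length_alt] using hk)] at htake
    have hsum := sum_sgns l
    rw [htake, cast_sum_map_neg] at hsum
    rcases sum_alt_cast (sgns l).length with h0 | h0 <;> rw [h0] at hsum <;> revert hsum <;> decide

lemma ne_alt_of_getElem {l : List ℤ} {i : ℕ} (h : i < l.length) (hne : l[i] ≠ (-1) ^ i) :
    l ≠ alt l.length := by
  intro e
  apply hne
  rw [List.getElem_of_eq e h, getElem_alt]

lemma alt_no_consec {l : List ℤ} {i : ℕ} (h : i + 1 < l.length) (heq : l[i]'(by omega) = l[i+1]) :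
    l ≠ alt l.length := by
  intro e
  have a := List.getElem_of_eq e (show i < l.length by omega)
  have b := List.getElem_of_eq e h
  rw [getElem_alt] at a b
  rw [a, b, pow_succ] at heq
  have h2 : ((-1 : ℤ) ^ i) = 0 := by linarith
  exact pow_ne_zero i (by norm_num) h2

lemma split_tree {l : List ℤ} {k : ℕ} (hk2 : k < l.length)
    (h1 : ∃ t, sgns t = (l.take k).map (fun x => -x))
    (h2 : ∃ t, sgns t = (l.drop k).map (fun x => -x)) : ∃ t, sgns t = l := by
  obtain ⟨t1, h1⟩ := h1; obtain ⟨t2, h2⟩ := h2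
  refine ⟨.node t1 t2, ?_⟩
  show (sgns t1 ++ sgns t2).map (fun x => -x) = l
  rw [h1, h2, ← List.map_append, neg_neg_map, List.take_append_drop]

lemma getElem_map_neg_take (l : List ℤ) (k i : ℕ) (h1 : i < k) (h2 : i < l.length) :
    ((l.take k).map (fun x => -x))[i]'(by simp; omega) = -l[i] := by
  rw [List.getElem_map, List.getElem_take]

lemma map_neg_take_consec_ne_alt {l : List ℤ} {i k : ℕ} (h1 : i + 1 < k) (h2 : k ≤ l.length)
    (heq : l[i]'(by omega) = l[i + 1]'(by omega)) :
    (l.take k).map (fun x => -x) ≠ alt ((l.take k).map (fun x => -x)).length := by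
  apply alt_no_consec (i := i) (by simp; omega)
  rw [getElem_map_neg_take l k i (by omega) (by omega),
    getElem_map_neg_take l k (i + 1) (by omega) (by omega), heq]

set_option maxHeartbeats 1000000 in
lemma good_sgns : ∀ m : ℕ, ∀ l : List ℤ, l.length = m → GoodL l → ∃ t, sgns t = l := by
  intro m
  induction m using Nat.strong_induction_on with
  | _ m IH =>
  intro l hlen hg
  obtain ⟨hpm, hsum, halt⟩ := hg
  rcases Nat.lt_or_ge m 2 with hm | hm
  · interval_cases m
    · rw [List.length_eq_zero_iff.mp hlen] at hsum
      exact absurd hsum (by decide)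
    · obtain ⟨a, rfl⟩ := List.length_eq_one_iff.mp hlen
      rcases hpm a (by simp) with rfl | rfl
      · exact ⟨.leaf, rfl⟩
      · rw [show ([(-1 : ℤ)].sum : ℤ) = -1 by simp] at hsum
        exact absurd hsum (by decide)
  -- main case : m ≥ 2
  have hne : l ≠ alt l.length := by
    rcases halt with h1 | h1
    · exact absurd (hlen ▸ h1) (by omega)
    · exact h1
  have hexists : ∃ j, j < l.length ∧ l.getD j 0 ≠ (-1) ^ j := by
    by_contra hc
    push_neg at hc
    apply hne
    apply List.ext_getElem (by rw [length_alt])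
    intro i h1 h2
    rw [getElem_alt, ← List.getD_eq_getElem l 0 h1]
    exact hc i h1
  classical
  obtain ⟨j, ⟨hj1, hj2⟩, hjmin'⟩ : ∃ j, (j < l.length ∧ l.getD j 0 ≠ (-1) ^ j) ∧
      ∀ i, i < j → ¬(i < l.length ∧ l.getD i 0 ≠ (-1) ^ i) :=
    ⟨Nat.find hexists, Nat.find_spec hexists, fun i hi => Nat.find_min hexists hi⟩
  have hmin : ∀ i, i < j → ∀ hil : i < l.length, l[i] = (-1) ^ i := by
    intro i hij hil
    have h5 := hjmin' i hij
    push_neg at h5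
    rw [← List.getD_eq_getElem l 0 hil]
    exact h5 hil
  have hjl : l[j]'hj1 ≠ (-1) ^ j := by rwa [List.getD_eq_getElem l 0 hj1] at hj2
  have hpmj := hpm _ (List.getElem_mem hj1)
  have hlj : l[j]'hj1 = -((-1) ^ j) := by
    rcases Nat.even_or_odd j with hp | hp
    · rw [hp.neg_one_pow] at hjl ⊢
      rcases hpmj with h | h
      · exact absurd h hjl
      · rw [h]
    · rw [hp.neg_one_pow] at hjl ⊢
      rcases hpmj with h | h
      · rw [h]; norm_num
      · exact absurd h hjl
  have htakej : l.take j = alt j := by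
    apply List.ext_getElem (by simp [length_alt]; omega)
    intro i h1 h2
    have h1' : i < j := by simp at h1; omega
    rw [List.getElem_take, getElem_alt]
    exact hmin i h1' (by omega)
  have hS : (((l.take (j + 1)).sum : ℤ) : ZMod 3) = 2 := by
    rw [List.sum_take_succ l j hj1, htakej, sum_alt, hlj]
    rcases Nat.even_or_odd j with hp | hp
    · rw [if_pos hp, hp.neg_one_pow]; decide
    · rw [if_neg (Nat.not_even_iff_odd.mpr hp), hp.neg_one_pow]; decide
  have hjlt : j + 1 < l.length := by
    rcases Nat.lt_or_ge (j + 1) l.length with h | h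
    · exact h
    · have h7 : j + 1 = l.length := by omega
      rw [h7, List.take_length, hsum] at hS
      exact absurd hS (by decide)
  have hd : (((l.drop (j + 1)).sum : ℤ) : ZMod 3) = -1 := by
    have h3 := congrArg (fun z : ℤ => (z : ZMod 3)) (List.sum_take_add_sum_drop l (j + 1))
    simp only [Int.cast_add] at h3
    rw [hS, hsum] at h3
    linear_combination h3
  have trySplit : ∀ k, 1 ≤ k → k < l.length →
      (((l.take k).sum : ℤ) : ZMod 3) = 2 →
      (((l.take k).map (fun x => -x)).length = 1 ∨
        (l.take k).map (fun x => -x) ≠ alt ((l.take k).map (fun x => -x)).length) →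
      (((l.drop k).map (fun x => -x)).length = 1 ∨
        (l.drop k).map (fun x => -x) ≠ alt ((l.drop k).map (fun x => -x)).length) →
      ∃ t, sgns t = l := by
    intro k hk1 hk hsumk ha hb
    have hdk : (((l.drop k).sum : ℤ) : ZMod 3) = -1 := by
      have h3 := congrArg (fun z : ℤ => (z : ZMod 3)) (List.sum_take_add_sum_drop l k)
      simp only [Int.cast_add] at h3
      rw [hsumk, hsum] at h3
      linear_combination h3
    apply split_tree hk
    · apply IH ((l.take k).map (fun x => -x)).length ?_ _ rfl
      · refine ⟨?_, ?_, ha⟩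
        · intro x hx
          simp only [List.mem_map] at hx
          obtain ⟨y, hy, rfl⟩ := hx
          rcases hpm y (List.take_subset k l hy) with h | h <;> simp [h]
        · rw [cast_sum_map_neg, hsumk]; decide
      · simp [hlen]; omega
    · apply IH ((l.drop k).map (fun x => -x)).length ?_ _ rfl
      · refine ⟨?_, ?_, hb⟩
        · intro x hx
          simp only [List.mem_map] at hx
          obtain ⟨y, hy, rfl⟩ := hx
          rcases hpm y (List.drop_subset k l hy) with h | h <;> simp [h]
        · rw [cast_sum_map_neg, hdk]; decide
      · simp [hlen]; omega
  by_cases hb : ((l.drop (j + 1)).map (fun x => -x)).length = 1 ∨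
      (l.drop (j + 1)).map (fun x => -x) ≠ alt ((l.drop (j + 1)).map (fun x => -x)).length
  · apply trySplit (j + 1) (by omega) hjlt hS ?_ hb
    rcases Nat.eq_zero_or_pos j with hj0 | hj0
    · left; simp [hj0]; omega
    · right
      apply ne_alt_of_getElem (i := 0) (by simpa using by omega)
      have h0 : ((l.take (j + 1)).map (fun x => -x))[0]'(by simpa using by omega) = -l[0]'(by omega) := by
        rw [List.getElem_map, List.getElem_take]
      rw [h0, hmin 0 hj0 (by omega)]
      decide
  · push_neg at hb
    obtain ⟨hb1, hb2⟩ := hb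
    have hlen_b : ((l.drop (j + 1)).map (fun x => -x)).length = l.length - (j + 1) := by simp
    rw [hlen_b] at hb1 hb2
    have hL1 : 1 ≤ l.length - (j + 1) := by omega
    have hL2 : 2 ≤ l.length - (j + 1) := by omega
    have hsb : (((alt (l.length - (j + 1))).sum : ℤ) : ZMod 3) = 1 := by
      rw [← hb2, cast_sum_map_neg, hd]; decide
    have hoddL : ¬ Even (l.length - (j + 1)) := by
      intro he
      rw [sum_alt, if_pos he] at hsb
      exact absurd hsb (by decide)
    have hL3 : 3 ≤ l.length - (j + 1) := by
      rw [Nat.even_iff] at hoddL; omega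
    have hlk : l[j + 1]'hjlt = -1 := by
      have h0 := List.getElem_of_eq hb2 (i := 0) (by simp; omega)
      rw [List.getElem_map, List.getElem_drop, getElem_alt, pow_zero] at h0
      simp only [Nat.add_zero] at h0
      linarith
    have hlast : l[(j + 1) + (l.length - (j + 1) - 1)]'(by omega) = -1 := by
      have h0 := List.getElem_of_eq hb2 (i := l.length - (j + 1) - 1) (by simp; omega)
      rw [List.getElem_map, List.getElem_drop, getElem_alt] at h0
      have hev : Even (l.length - (j + 1) - 1) := by
        rw [Nat.even_iff] at hoddL ⊢; omega
      rw [hev.neg_one_pow] at h0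
      linarith
    have hk2lt : (j + 1) + (l.length - (j + 1) - 1) < l.length := by omega
    have hS2 : (((l.take ((j + 1) + (l.length - (j + 1) - 1))).sum : ℤ) : ZMod 3) = 2 := by
      have h4 := List.sum_take_succ l ((j + 1) + (l.length - (j + 1) - 1)) hk2lt
      have h5 : l.take ((j + 1) + (l.length - (j + 1) - 1) + 1) = l := by
        apply List.take_of_length_le; omega
      rw [h5, hlast] at h4
      have h6 := congrArg (fun z : ℤ => (z : ZMod 3)) h4
      simp only [Int.cast_add, Int.cast_neg, Int.cast_one] at h6
      rw [hsum] at h6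
      linear_combination -h6
    have key : ∀ i0 i1 : ℕ, ∀ h01 : i1 = i0 + 1, ∀ hi : i1 < l.length, i0 + 1 < (j + 1) + (l.length - (j + 1) - 1) →
        l[i0]'(by omega) = l[i1]'hi → ∃ t, sgns t = l := by
      intro i0 i1 h01 hi hi2 heq
      subst h01
      apply trySplit ((j + 1) + (l.length - (j + 1) - 1)) (by omega) hk2lt hS2 ?_ ?_
      · right
        exact map_neg_take_consec_ne_alt hi2 (by omega) heq
      · left; simp; omega
    rcases Nat.even_or_odd j with hp | hp
    · apply key j (j + 1) rfl hjlt (by omega)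
      rw [hlj, hp.neg_one_pow, hlk]
    · have hj0 : 1 ≤ j := by
        rcases hp with ⟨c, hc⟩; omega
      apply key (j - 1) j (by omega) hj1 (by omega)
      have hev : Even (j - 1) := by rw [Nat.even_iff]; rw [Nat.odd_iff] at hp; omega
      have e5 : l[j - 1]'(by omega) = 1 := by
        rw [hmin (j - 1) (by omega) (by omega), hev.neg_one_pow]
      have e6 : l[j]'hj1 = 1 := by rw [hlj, hp.neg_one_pow]; norm_num
      rw [e5, e6]

def altF (m : ℕ) : Fin m → ℤ := fun i => (-1) ^ (i : ℕ)

def signSet (n r : ℕ) : Finset (Fin n → ℤ) :=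
  (Finset.univ.powersetCard r).image (fun s i => if i ∈ s then (1 : ℤ) else -1)

lemma mem_signSet {n r : ℕ} (hr : r ≤ n) (ε : Fin n → ℤ) :
    ε ∈ signSet n r ↔ ((∀ i, ε i = 1 ∨ ε i = -1) ∧
      (Finset.univ.filter (fun i => ε i = 1)).card = r) := by
  constructor
  · intro h
    simp only [signSet, Finset.mem_image, Finset.mem_powersetCard] at h
    obtain ⟨s, ⟨-, hcard⟩, rfl⟩ := h
    constructor
    · intro i; by_cases hi : i ∈ s <;> simp [hi]
    · have : Finset.univ.filter (fun i => (if i ∈ s then (1:ℤ) else -1) = 1) = s := by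
        ext i
        by_cases hi : i ∈ s <;> simp [hi]
      rw [this, hcard]
  · rintro ⟨hpm, hcard⟩
    simp only [signSet, Finset.mem_image, Finset.mem_powersetCard]
    refine ⟨Finset.univ.filter (fun i => ε i = 1), ⟨Finset.subset_univ _, hcard⟩, ?_⟩
    funext i
    by_cases hi : ε i = 1
    · simp [hi]
    · have : ε i = -1 := (hpm i).resolve_left hi
      simp [hi, this]

lemma card_signSet (n r : ℕ) : (signSet n r).card = Nat.choose n r := by
  rw [signSet, Finset.card_image_of_injective _ ?_, Finset.card_powersetCard,
    Finset.card_univ, Fintype.card_fin]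
  intro s t hst
  ext i
  have := congrFun hst i
  by_cases hi : i ∈ s <;> by_cases ht : i ∈ t <;> simp [hi, ht] at this ⊢

lemma sum_of_pm {n : ℕ} (ε : Fin n → ℤ) (h : ∀ i, ε i = 1 ∨ ε i = -1) :
    ∑ i, ε i = 2 * ((Finset.univ.filter (fun i => ε i = 1)).card : ℤ) - n := by
  rw [← Finset.sum_filter_add_sum_filter_not Finset.univ (fun i => ε i = 1)]
  have e1 : ∑ i ∈ Finset.univ.filter (fun i => ε i = 1), ε i
      = ((Finset.univ.filter (fun i => ε i = 1)).card : ℤ) := by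
    rw [Finset.sum_congr rfl (fun i hi => (Finset.mem_filter.mp hi).2)]
    simp
  have e2 : ∑ i ∈ Finset.univ.filter (fun i => ¬ ε i = 1), ε i
      = -((Finset.univ.filter (fun i => ¬ ε i = 1)).card : ℤ) := by
    rw [Finset.sum_congr rfl (fun i hi => (h i).resolve_left (Finset.mem_filter.mp hi).2)]
    simp
  have e3 : (Finset.univ.filter (fun i => ¬ ε i = 1)).card
      = n - (Finset.univ.filter (fun i => ε i = 1)).card := by
    have := Finset.card_filter_add_card_filter_not (s := Finset.univ)
      (p := fun i => ε i = 1)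
    rw [Finset.card_univ, Fintype.card_fin] at this
    omega
  have hle : (Finset.univ.filter (fun i => ε i = 1)).card ≤ n := by
    have := Finset.card_filter_le Finset.univ (fun i => ε i = 1)
    rwa [Finset.card_univ, Fintype.card_fin] at this
  rw [e1, e2, e3]
  push_cast [Nat.cast_sub hle]
  ring

lemma alt_eq_ofFn_altF (m : ℕ) : alt m = List.ofFn (altF m) := rfl

lemma achievable_iff_good (n : ℕ) (ε : Fin (n + 1) → ℤ) :
    (∃ t : BTree, t.numLeaves = n + 1 ∧ ∀ i : Fin (n + 1), ε i = (-1) ^ t.depths.getD i 0) ↔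
      GoodL (List.ofFn ε) := by
  constructor
  · rintro ⟨t, ht1, ht2⟩
    have hlent : (sgns t).length = n + 1 := by rw [length_sgns, ht1]
    have hdep : t.depths.length = n + 1 := ht1
    have hofn : List.ofFn ε = sgns t := by
      apply List.ext_getElem (by simp [hlent])
      intro i h1 h2
      have hi : i < n + 1 := by simpa using h1
      rw [List.getElem_ofFn]
      have h3 := ht2 ⟨i, hi⟩
      have h4 : (sgns t)[i]'h2 = (t.depths.map (fun d => (-1 : ℤ) ^ d))[i]'(by simp only [List.length_map, hdep]; omega) :=
        List.getElem_of_eq (sgns_eq t) h2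
      rw [h3, h4, List.getElem_map]
      have h5 : t.depths.getD (↑(⟨i, hi⟩ : Fin (n + 1))) 0 = t.depths[i]'(by omega) := by
        simp only [Fin.val_mk]
        exact List.getD_eq_getElem t.depths 0 (by omega)
      rw [h5]
    rw [hofn]; exact sgns_good t
  · intro hg
    obtain ⟨t, ht⟩ := good_sgns (n + 1) (List.ofFn ε) (by simp) hg
    have hlent : (sgns t).length = n + 1 := by rw [ht]; simp
    refine ⟨t, by rw [← length_sgns, hlent], fun i => ?_⟩
    have hdep : t.depths.length = n + 1 := by
      have h9 := length_sgns t
      rw [BTree.numLeaves] at h9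
      omega
    have h1 : (List.ofFn ε)[(i : ℕ)]'(by simp; omega) = (sgns t)[(i : ℕ)]'(by omega) :=
      (List.getElem_of_eq ht (by omega)).symm
    rw [List.getElem_ofFn] at h1
    have h4 : (sgns t)[(i : ℕ)]'(by omega) = (t.depths.map (fun d => (-1 : ℤ) ^ d))[(i : ℕ)]'(by simp only [List.length_map, hdep]; omega) :=
      List.getElem_of_eq (sgns_eq t) (by omega)
    rw [h4, List.getElem_map] at h1
    have h5 : t.depths.getD (↑i) 0 = t.depths[(i : ℕ)]'(by omega) :=
      List.getD_eq_getElem t.depths 0 (by omega)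
    rw [h5]
    simpa using h1

theorem stmt10 (n r : ℕ) (hn : 1 ≤ n) (hr : r ≤ n + 1) :
    Set.ncard {ε : Fin (n + 1) → ℤ |
        (∃ t : BTree, t.numLeaves = n + 1 ∧
          ∀ i : Fin (n + 1), ε i = (-1) ^ t.depths.getD i 0) ∧
        (Finset.univ.filter (fun i => ε i = 1)).card = r} =
      if (n + r) % 3 = 1 then
        (if n + 2 = 2 * r then Nat.choose (n + 1) r - 1 else Nat.choose (n + 1) r)
      else 0 := by
  have hchar : ∀ ε : Fin (n + 1) → ℤ,
      (((∃ t : BTree, t.numLeaves = n + 1 ∧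
          ∀ i : Fin (n + 1), ε i = (-1) ^ t.depths.getD i 0) ∧
        (Finset.univ.filter (fun i => ε i = 1)).card = r) ↔
      ((∀ i, ε i = 1 ∨ ε i = -1) ∧ (((∑ i, ε i : ℤ) : ZMod 3) = 1) ∧ ε ≠ altF (n + 1) ∧
        (Finset.univ.filter (fun i => ε i = 1)).card = r)) := by
    intro ε
    rw [achievable_iff_good]
    unfold GoodL
    constructor
    · rintro ⟨⟨h1, h2, h3⟩, h4⟩
      refine ⟨?_, ?_, ?_, h4⟩
      · intro i
        exact h1 (ε i) (List.mem_ofFn.mpr ⟨i, rfl⟩)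
      · rwa [List.sum_ofFn] at h2
      · rcases h3 with h3 | h3
        · rw [List.length_ofFn] at h3; omega
        · intro hcon
          apply h3
          rw [List.length_ofFn, alt_eq_ofFn_altF, hcon]
    · rintro ⟨h1, h2, h3, h4⟩
      refine ⟨⟨?_, ?_, Or.inr ?_⟩, h4⟩
      · intro x hx
        obtain ⟨i, rfl⟩ := List.mem_ofFn.mp hx
        exact h1 i
      · rwa [List.sum_ofFn]
      · rw [List.length_ofFn, alt_eq_ofFn_altF]
        intro hcon
        exact h3 (List.ofFn_injective hcon)
  have hsum_count : ∀ ε : Fin (n + 1) → ℤ, (∀ i, ε i = 1 ∨ ε i = -1) →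
      (Finset.univ.filter (fun i => ε i = 1)).card = r →
      ((((∑ i, ε i : ℤ)) : ZMod 3) = 1 ↔ (n + r) % 3 = 1) := by
    intro ε h1 h2
    rw [sum_of_pm ε h1, h2]
    rw [show (1 : ZMod 3) = ((1 : ℤ) : ZMod 3) by norm_num]
    rw [ZMod.intCast_eq_intCast_iff]
    show (2 * (r : ℤ) - (↑(n + 1) : ℤ)) % 3 = 1 % 3 ↔ _
    push_cast
    constructor <;> intro h <;> omega
  have haltF_pm : ∀ i : Fin (n + 1), altF (n + 1) i = 1 ∨ altF (n + 1) i = -1 := by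
    intro i
    rcases Nat.even_or_odd (i : ℕ) with hp | hp
    · left; exact hp.neg_one_pow
    · right; exact hp.neg_one_pow
  have haltF_sum : ∑ i, altF (n + 1) i = if Even (n + 1) then 0 else 1 := by
    rw [← List.sum_ofFn, ← alt_eq_ofFn_altF, sum_alt]
  have haltF_count : ((n + r) % 3 = 1) →
      ((Finset.univ.filter (fun i => altF (n + 1) i = 1)).card = r ↔ n + 2 = 2 * r) := by
    intro h3
    have hsum := sum_of_pm (altF (n + 1)) haltF_pm
    rw [haltF_sum] at hsum
    constructor
    · intro hc
      rw [hc] at hsum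
      split at hsum
      · push_cast at hsum; omega
      · push_cast at hsum; omega
    · intro h2
      have hodd : ¬ Even (n + 1) := by rw [Nat.even_iff]; omega
      rw [if_neg hodd] at hsum
      push_cast at hsum
      omega
  by_cases h3 : (n + r) % 3 = 1
  · by_cases h2 : n + 2 = 2 * r
    · have hset : {ε : Fin (n + 1) → ℤ |
          (∃ t : BTree, t.numLeaves = n + 1 ∧
            ∀ i : Fin (n + 1), ε i = (-1) ^ t.depths.getD i 0) ∧
          (Finset.univ.filter (fun i => ε i = 1)).card = r} =
          ↑((signSet (n + 1) r).erase (altF (n + 1))) := by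
        ext ε
        simp only [Set.mem_setOf_eq, Finset.coe_erase, Set.mem_diff, Finset.mem_coe,
          Set.mem_singleton_iff]
        rw [hchar ε, mem_signSet hr]
        constructor
        · rintro ⟨h1, hs, hne, hc⟩
          exact ⟨⟨h1, hc⟩, hne⟩
        · rintro ⟨⟨h1, hc⟩, hne⟩
          exact ⟨h1, (hsum_count ε h1 hc).mpr h3, hne, hc⟩
      rw [hset, Set.ncard_coe_finset, Finset.card_erase_of_mem, card_signSet, if_pos h3,
        if_pos h2]
      rw [mem_signSet hr]
      exact ⟨haltF_pm, (haltF_count h3).mpr h2⟩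
    · have hset : {ε : Fin (n + 1) → ℤ |
          (∃ t : BTree, t.numLeaves = n + 1 ∧
            ∀ i : Fin (n + 1), ε i = (-1) ^ t.depths.getD i 0) ∧
          (Finset.univ.filter (fun i => ε i = 1)).card = r} = ↑(signSet (n + 1) r) := by
        ext ε
        simp only [Set.mem_setOf_eq, Finset.mem_coe]
        rw [hchar ε, mem_signSet hr]
        constructor
        · rintro ⟨h1, hs, hne, hc⟩
          exact ⟨h1, hc⟩
        · rintro ⟨h1, hc⟩
          refine ⟨h1, (hsum_count ε h1 hc).mpr h3, ?_, hc⟩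
          intro hcon
          apply h2
          apply (haltF_count h3).mp
          rw [hcon] at hc
          exact hc
      rw [hset, Set.ncard_coe_finset, card_signSet, if_pos h3, if_neg h2]
  · have hset : {ε : Fin (n + 1) → ℤ |
        (∃ t : BTree, t.numLeaves = n + 1 ∧
          ∀ i : Fin (n + 1), ε i = (-1) ^ t.depths.getD i 0) ∧
        (Finset.univ.filter (fun i => ε i = 1)).card = r} = (∅ : Set (Fin (n + 1) → ℤ)) := by
      ext ε
      simp only [Set.mem_setOf_eq, Set.mem_empty_iff_false, iff_false]
      intro hmem
      obtain ⟨h1, hs, hne, hc⟩ := (hchar ε).mp hmem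
      exact h3 ((hsum_count ε h1 hc).mp hs)
    rw [hset, if_neg h3, Set.ncard_empty]
end

section
/- Equivalently: the number of full binary trees' parity depth-vectors with n+1 leaves having exactly r leaves of even depth (counted as distinct vectors in {0,1}^{n+1}, not as trees) equals C(n+1,r) if n+r ≡ 1 (mod 3) and n ≠ 2r-2, equals C(n+1,r) - 1 if n+r ≡ 1 (mod 3) and n = 2r-2, and equals 0 otherwise. -/
namespace Stmt11

/-- parity list of a tree -/
def pl (t : BTree) : List ℕ := t.depths.map (· % 2)

lemma pl_leaf : pl .leaf = [0] := rfl

lemma pl_node (l r : BTree) : pl (.node l r) = ((pl l) ++ (pl r)).map (fun x => 1 - x) := by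
  simp only [pl, BTree.depths, List.map_map, ← List.map_append]
  apply List.map_congr_left
  intro d _
  simp only [Function.comp_apply]
  omega

lemma pl_lt_two (t : BTree) : ∀ x ∈ pl t, x < 2 := by
  intro x hx
  simp only [pl, List.mem_map] at hx
  obtain ⟨d, _, rfl⟩ := hx
  omega

lemma pl_ne_nil (t : BTree) : pl t ≠ [] := by
  induction t with
  | leaf => simp [pl_leaf]
  | node l r ihl ihr => simp [pl_node, ihl]

lemma pl_length (t : BTree) : (pl t).length = t.numLeaves := by
  simp [pl, BTree.numLeaves]

/-- signed sum in ZMod 3 -/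
def s (p : List ℕ) : ZMod 3 := (p.map (fun x => (-1 : ZMod 3) ^ x)).sum

lemma s_nil : s [] = 0 := rfl
lemma s_cons (x : ℕ) (p : List ℕ) : s (x :: p) = (-1) ^ x + s p := by simp [s]
lemma s_append (a b : List ℕ) : s (a ++ b) = s a + s b := by simp [s]

lemma s_map_flip (p : List ℕ) (hp : ∀ x ∈ p, x < 2) :
    s (p.map (fun x => 1 - x)) = - s p := by
  induction p with
  | nil => simp [s]
  | cons y q ih =>
    have hy : y < 2 := hp y (by simp)
    have ihq := ih (fun x hx => hp x (by simp [hx]))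
    simp only [List.map_cons, s_cons, ihq]
    interval_cases y <;> ring_nf

lemma s_pl (t : BTree) : s (pl t) = 1 := by
  induction t with
  | leaf => simp [pl_leaf, s_cons, s_nil]
  | node l r ihl ihr =>
    rw [pl_node, s_map_flip _ (fun x hx => by
      rcases List.mem_append.1 hx with h | h
      exacts [pl_lt_two l x h, pl_lt_two r x h]),
      s_append, ihl, ihr]
    decide

/-- the bad alternating list, length 2k+1 -/
def B : ℕ → List ℕ
  | 0 => [0]
  | k + 1 => 0 :: 1 :: B k

lemma B_length (k : ℕ) : (B k).length = 2 * k + 1 := by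
  induction k with
  | zero => rfl
  | succ k ih => simp [B, ih]; omega

lemma B_head (k : ℕ) : ∃ tl, B k = 0 :: tl := by
  cases k with
  | zero => exact ⟨[], rfl⟩
  | succ k => exact ⟨_, rfl⟩

lemma B_lt_two (k : ℕ) : ∀ x ∈ B k, x < 2 := by
  induction k with
  | zero => intro x hx; simp [B] at hx; omega
  | succ k ih => intro x hx; simp only [B, List.mem_cons] at hx
                 rcases hx with rfl | rfl | h
                 · omega
                 · omega
                 · exact ih x h

lemma B_chain (k : ℕ) : List.Chain' (fun u v => u ≠ v) (B k) := by
  induction k with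
  | zero => simp [B, List.Chain']
  | succ k ih =>
    obtain ⟨tl, htl⟩ := B_head k
    simp only [List.Chain'] at ih ⊢
    rw [B, List.isChain_cons_cons, htl, List.isChain_cons_cons, ← htl]
    exact ⟨by omega, by omega, ih⟩

lemma B_getD (k : ℕ) : ∀ j < 2 * k + 1, (B k).getD j 0 = j % 2 := by
  induction k with
  | zero => intro j hj; interval_cases j; rfl
  | succ k ih =>
    intro j hj
    match j with
    | 0 => rfl
    | 1 => rfl
    | (j + 2) =>
      show (B k).getD j 0 = (j + 2) % 2
      rw [ih j (by omega)]
      omega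

lemma chain_mid {a : List ℕ} {u v : ℕ} {b : List ℕ}
    (h : List.Chain' (fun u v => u ≠ v) (a ++ u :: v :: b)) : u ≠ v := by
  induction a with
  | nil => exact (List.isChain_cons_cons.1 h).1
  | cons c a ih => exact ih (List.IsChain.tail h)

lemma B_no_pair (k : ℕ) (a : List ℕ) (x : ℕ) (b : List ℕ) : B k ≠ a ++ x :: x :: b := by
  intro h
  exact chain_mid (h ▸ B_chain k) rfl

lemma not_chain_pair {p : List ℕ} (h : ¬ List.Chain' (fun u v => u ≠ v) p) :
    ∃ a x b, p = a ++ x :: x :: b := by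
  induction p with
  | nil => exact absurd List.isChain_nil h
  | cons x tl ih =>
    match tl, ih with
    | [], _ => exact absurd (List.isChain_singleton x) h
    | y :: q, ih =>
      by_cases hxy : x = y
      · exact ⟨[], x, q, by rw [hxy]; rfl⟩
      · have : ¬ List.Chain' (fun u v => u ≠ v) (y :: q) := by
          intro hc
          exact h (List.isChain_cons_cons.2 ⟨hxy, hc⟩)
        obtain ⟨a, z, b, hz⟩ := ih this
        exact ⟨x :: a, z, b, by rw [hz]; rfl⟩

lemma classify : ∀ (m : ℕ) (p : List ℕ), p.length ≤ m → (∀ x ∈ p, x < 2) →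
    List.Chain' (fun u v => u ≠ v) p → s p = 1 → ∃ k, p = B k := by
  intro m
  induction m with
  | zero =>
    intro p hm _ _ hs
    have hp : p = [] := List.length_eq_zero_iff.1 (by omega)
    rw [hp] at hs
    exact absurd hs (by decide)
  | succ m ih =>
    intro p hm hlt hc hs
    match p with
    | [] => exact absurd hs (by decide)
    | [x] =>
      have hx : x < 2 := hlt x (by simp)
      interval_cases x
      · exact ⟨0, rfl⟩
      · exact absurd hs (by simp [s_cons, s_nil]; decide)
    | x :: y :: q =>
      have hx : x < 2 := hlt x (by simp)
      have hy : y < 2 := hlt y (by simp)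
      have hxy : x ≠ y := (List.isChain_cons_cons.1 hc).1
      have hcy : List.Chain' (fun u v => u ≠ v) (y :: q) := (List.isChain_cons_cons.1 hc).2
      have hsq : s q = 1 := by
        have : s (x :: y :: q) = (-1) ^ x + (-1) ^ y + s q := by
          rw [s_cons, s_cons]; ring
        rw [this] at hs
        interval_cases x <;> interval_cases y
        · exact absurd rfl hxy
        · linear_combination hs
        · linear_combination hs
        · exact absurd rfl hxy
      match q with
      | [] => exact absurd hsq (by decide)
      | z :: q' =>
        obtain ⟨k, hk⟩ := ih (z :: q') (by simp at hm ⊢; omega)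
          (fun w hw => hlt w (List.mem_cons_of_mem _ (List.mem_cons_of_mem _ hw)))
          (hcy.tail) hsq
        obtain ⟨tl, htl⟩ := B_head k
        rw [hk, htl] at hcy
        have hy0 : y ≠ 0 := (List.isChain_cons_cons.1 hcy).1
        have : y = 1 := by omega
        have : x = 0 := by omega
        exact ⟨k + 1, by rw [B, ‹x = 0›, ‹y = 1›, hk, htl]⟩

lemma grow : ∀ (t : BTree) (a : List ℕ) (y : ℕ) (b : List ℕ), pl t = a ++ y :: b →
    ∃ t', pl t' = a ++ (1 - y) :: (1 - y) :: b := by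
  intro t
  induction t with
  | leaf =>
    intro a y b h
    rw [pl_leaf] at h
    match a, h with
    | [], h =>
      obtain ⟨rfl, rfl⟩ : y = 0 ∧ b = [] := by simpa using h.symm
      exact ⟨.node .leaf .leaf, rfl⟩
    | c :: a', h => simp at h
  | node l r ihl ihr =>
    intro a y b h
    have h' : (pl l).map (fun x => 1 - x) ++ (pl r).map (fun x => 1 - x) = a ++ y :: b := by
      rw [← List.map_append, ← pl_node]; exact h
    rcases List.append_eq_append_iff.1 h' with ⟨a2, ha, hb⟩ | ⟨c', ha, hb⟩
    · -- split lands in r : map g (pl r) = a2 ++ y :: b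
      obtain ⟨l₁, l₂, hr, hl₁, hl₂⟩ := List.map_eq_append_iff.1 hb
      obtain ⟨w, l₂', rfl, hw, hmap⟩ := List.map_eq_cons_iff.1 hl₂
      have hw2 : w < 2 := pl_lt_two r w (by rw [hr]; simp)
      obtain ⟨r', hr'⟩ := ihr l₁ w l₂' hr
      refine ⟨.node l r', ?_⟩
      rw [pl_node, hr', List.map_append, List.map_append, ha]
      have hwy : 1 - w = y := hw
      have h2 : 1 - (1 - w) = w := by omega
      have hy2 : (1 : ℕ) - y = w := by omega
      simp [h2, hl₁, hmap, hy2, List.append_assoc]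
    · match c', hb with
      | [], hb =>
        obtain ⟨w, l₂', hr, hw, hmap⟩ := List.map_eq_cons_iff.1 hb.symm
        have hw2 : w < 2 := pl_lt_two r w (by rw [hr]; simp)
        obtain ⟨r', hr'⟩ := ihr [] w l₂' hr
        refine ⟨.node l r', ?_⟩
        rw [pl_node, List.map_append, hr']
        have hy : (1 : ℕ) - y = w := by have : 1 - w = y := hw; omega
        have h2 : 1 - (1 - w) = w := by omega
        have ha' : a = List.map (fun x => 1 - x) (pl l) := by simpa using ha.symm
        simp [h2, hmap, hy, ha']
      | y' :: c'', hb =>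
        obtain ⟨rfl, hb2⟩ : y = y' ∧ b = c'' ++ (pl r).map (fun x => 1 - x) := by
          simpa using hb
        obtain ⟨l₁, l₂, hl, hl₁, hl₂⟩ := List.map_eq_append_iff.1 ha
        obtain ⟨w, l₂', rfl, hw, hmap⟩ := List.map_eq_cons_iff.1 hl₂
        have hw2 : w < 2 := pl_lt_two l w (by rw [hl]; simp)
        obtain ⟨l', hl'⟩ := ihl l₁ w l₂' hl
        refine ⟨.node l' r, ?_⟩
        rw [pl_node, List.map_append, hl', List.map_append]
        have hy : (1 : ℕ) - y = w := by have : 1 - w = y := hw; omega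
        have h2 : 1 - (1 - w) = w := by omega
        simp [h2, hmap, hl₁, hy, hb2, List.append_assoc]

lemma treePair (t : BTree) : pl t = [0] ∨ ∃ a x b, pl t = a ++ x :: x :: b := by
  induction t with
  | leaf => exact .inl rfl
  | node l r ihl ihr =>
    right
    rcases ihl with hl | ⟨a, x, b, hab⟩
    · rcases ihr with hrr | ⟨a, x, b, hab⟩
      · exact ⟨[], 1, [], by rw [pl_node, hl, hrr]; rfl⟩
      · refine ⟨((pl l).map (fun x => 1 - x)) ++ a.map (fun x => 1 - x), 1 - x, b.map (fun x => 1 - x), ?_⟩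
        rw [pl_node, List.map_append, hab]
        simp [List.append_assoc]
    · refine ⟨a.map (fun x => 1 - x), 1 - x, (b ++ pl r).map (fun x => 1 - x), ?_⟩
      rw [pl_node, hab]
      simp [List.append_assoc]

lemma sred (a : List ℕ) (x : ℕ) (b : List ℕ) (hx : x < 2) :
    s (a ++ (1 - x) :: b) = s (a ++ x :: x :: b) := by
  have h3 : (3 : ZMod 3) = 0 := rfl
  rw [s_append, s_append, s_cons, s_cons, s_cons]
  interval_cases x <;> norm_num <;>
    first
      | linear_combination h3
      | linear_combination -h3

lemma suff : ∀ (m : ℕ) (p : List ℕ), p.length ≤ m → (∀ x ∈ p, x < 2) → s p = 1 →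
    (∀ k, p ≠ B (k + 1)) → ∃ t, pl t = p := by
  intro m
  induction m with
  | zero =>
    intro p hm _ hs _
    have hp : p = [] := List.length_eq_zero_iff.1 (by omega)
    rw [hp] at hs
    exact absurd hs (by decide)
  | succ m ih =>
    intro p hm hlt hs hB
    by_cases hc : List.Chain' (fun u v => u ≠ v) p
    · obtain ⟨k, rfl⟩ := classify p.length p le_rfl hlt hc hs
      match k with
      | 0 => exact ⟨.leaf, rfl⟩
      | k + 1 => exact absurd rfl (hB k)
    · obtain ⟨a, x, b, rfl⟩ := not_chain_pair hc
      have hx : x < 2 := hlt x (by simp)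
      by_cases hq : ∀ k, a ++ (1 - x) :: b ≠ B (k + 1)
      · obtain ⟨t', ht'⟩ := ih (a ++ (1 - x) :: b)
          (by simp only [List.length_append, List.length_cons] at hm ⊢; omega)
          (by intro w hw
              simp only [List.mem_append, List.mem_cons] at hw
              rcases hw with h | h | h
              · exact hlt w (by simp [h])
              · omega
              · exact hlt w (by simp [h]))
          (by rw [sred a x b hx]; exact hs) hq
        obtain ⟨t'', ht''⟩ := grow t' a (1 - x) b ht'
        have h1 : 1 - (1 - x) = x := by omega
        rw [h1] at ht''
        exact ⟨t'', ht''⟩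
      · push_neg at hq
        obtain ⟨k, hk⟩ := hq
        rcases List.eq_nil_or_concat a with rfl | ⟨a', w, rfl⟩
        · -- a = [] : p = x :: x :: b, and (1-x) :: b = B (k+1)
          rw [List.nil_append, B] at hk
          simp only [List.cons.injEq] at hk
          obtain ⟨hx0, rfl⟩ := hk
          have hx1 : x = 1 := by omega
          subst hx1
          obtain ⟨t', ht'⟩ := ih ([1] ++ 0 :: B k)
            (by simp only [List.length_append, List.length_cons, List.length_nil,
                  List.nil_append] at hm ⊢; omega)
            (by intro v hv
                simp only [List.mem_append, List.mem_cons, List.mem_singleton,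
                  List.not_mem_nil, or_false, false_or] at hv
                rcases hv with h | h | h
                · omega
                · omega
                · exact B_lt_two k v h)
            (by have h' := sred [1] 1 (B k) (by omega)
                norm_num at h' ⊢
                rw [h']
                simpa using hs)
            (by intro j hj
                rw [B] at hj
                simp only [List.singleton_append, List.cons.injEq] at hj
                omega)
          obtain ⟨t'', ht''⟩ := grow t' [1] 0 (B k) ht'
          exact ⟨t'', by simpa using ht''⟩
        · -- a = a' ++ [w]
          simp only [List.concat_eq_append] at *
          have hk' : a' ++ w :: (1 - x) :: b = B (k + 1) := by
            rw [← hk]; simp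
          have hchain : List.Chain' (fun u v => u ≠ v) (a' ++ w :: (1 - x) :: b) := by
            rw [hk']; exact B_chain (k + 1)
          have hwx : w ≠ 1 - x := chain_mid hchain
          have hw2 : w < 2 := hlt w (by simp)
          have hwxeq : w = x := by omega
          subst hwxeq
          rcases List.eq_nil_or_concat a' with rfl | ⟨a'', u, rfl⟩
          · -- a' = [] : w :: (1-w) :: b = B (k+1)
            rw [List.nil_append, B] at hk'
            simp only [List.cons.injEq] at hk'
            obtain ⟨hw0, h1w, rfl⟩ := hk'
            subst hw0
            obtain ⟨t', ht'⟩ := ih (1 :: 0 :: B k)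
              (by simp only [List.length_append, List.length_cons, List.length_nil,
                    List.nil_append] at hm ⊢; omega)
              (by intro v hv
                  simp only [List.mem_cons] at hv
                  rcases hv with h | h | h
                  · omega
                  · omega
                  · exact B_lt_two k v h)
              (by have h' := sred [] 0 (0 :: B k) (by omega)
                  norm_num at h' ⊢
                  rw [h']
                  simpa using hs)
              (by intro j hj
                  rw [B] at hj
                  simp only [List.cons.injEq] at hj
                  omega)
            obtain ⟨t'', ht''⟩ := grow t' [] 1 (0 :: B k) (by simpa using ht')
            refine ⟨t'', ?_⟩
            rw [ht'']
            norm_num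
          · -- a' = a'' ++ [u]
            simp only [List.concat_eq_append] at *
            have hchain' : List.Chain' (fun p q => p ≠ q) (a'' ++ u :: w :: ((1 - w) :: b)) := by
              have he : (a'' ++ [u]) ++ w :: (1 - w) :: b = a'' ++ u :: w :: ((1 - w) :: b) := by
                simp
              rw [← he]; exact hchain
            have hux : u ≠ w := chain_mid hchain'
            have hu2 : u < 2 := hlt u (by simp)
            have hu : u = 1 - w := by omega
            obtain ⟨t', ht'⟩ := ih ((a'' ++ [u]) ++ (1 - w) :: w :: b)
              (by simp only [List.length_append, List.length_cons, List.length_nil] at hm ⊢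
                  omega)
              (by intro v hv
                  simp only [List.mem_append, List.mem_cons, List.mem_singleton,
                    List.not_mem_nil, or_false, false_or] at hv
                  rcases hv with (h | h) | h | h | h
                  · exact hlt v (by simp [h])
                  · exact hlt v (by simp [h])
                  · omega
                  · omega
                  · exact hlt v (by simp [h]))
              (by rw [sred (a'' ++ [u]) w (w :: b) hw2]
                  rw [show (a'' ++ [u]) ++ w :: w :: w :: b
                        = ((a'' ++ [u]) ++ [w]) ++ w :: w :: b by simp]
                  exact hs)
              (by intro j hj
                  rw [hu] at hj
                  rw [show (a'' ++ [1 - w]) ++ (1 - w) :: w :: b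
                        = a'' ++ (1 - w) :: (1 - w) :: (w :: b) by simp] at hj
                  exact B_no_pair (j + 1) a'' (1 - w) (w :: b) hj.symm)
            obtain ⟨t'', ht''⟩ := grow t' (a'' ++ [u]) (1 - w) (w :: b) ht'
            refine ⟨t'', ?_⟩
            rw [ht'']
            have h1 : 1 - (1 - w) = w := by omega
            rw [h1]
            simp

lemma realize_iff (p : List ℕ) (hlt : ∀ x ∈ p, x < 2) :
    (∃ t, pl t = p) ↔ (s p = 1 ∧ ∀ k, p ≠ B (k + 1)) := by
  constructor
  · rintro ⟨t, rfl⟩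
    refine ⟨s_pl t, fun k hk => ?_⟩
    rcases treePair t with h | ⟨a, x, b, hab⟩
    · rw [h] at hk
      have := congrArg List.length hk
      rw [B_length] at this
      simp at this
    · rw [hk] at hab
      exact B_no_pair (k + 1) a x b hab
  · rintro ⟨hs, hB⟩
    exact suff p.length p le_rfl hlt hs hB

/-! ### counting -/

def Lv {n : ℕ} (v : Fin n → Fin 2) : List ℕ := List.ofFn (fun i => (v i : ℕ))

lemma Lv_length {n : ℕ} (v : Fin n → Fin 2) : (Lv v).length = n := List.length_ofFn

lemma Lv_lt_two {n : ℕ} (v : Fin n → Fin 2) : ∀ x ∈ Lv v, x < 2 := by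
  intro x hx
  rw [Lv, List.mem_ofFn] at hx
  obtain ⟨i, rfl⟩ := hx
  exact (v i).isLt

lemma P_iff {n : ℕ} (v : Fin (n + 1) → Fin 2) :
    (∃ t : BTree, t.numLeaves = n + 1 ∧
      ∀ i : Fin (n + 1), (v i : ℕ) = t.depths.getD i 0 % 2) ↔ ∃ t, pl t = Lv v := by
  constructor
  · rintro ⟨t, hlen, hv⟩
    refine ⟨t, ?_⟩
    apply List.ext_getElem (by rw [pl_length, hlen, Lv_length])
    intro i h1 h2
    have hi : i < t.depths.length := by
      rw [show t.depths.length = t.numLeaves from rfl, hlen, ← Lv_length v]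
      exact h2
    have hin : i < n + 1 := by rw [← Lv_length v]; exact h2
    simp only [Lv, List.getElem_ofFn]
    calc (pl t)[i] = t.depths[i] % 2 := by simp [pl]
      _ = t.depths.getD i 0 % 2 := by rw [List.getD_eq_getElem _ _ hi]
      _ = ((v ⟨i, hin⟩ : Fin 2) : ℕ) := (hv ⟨i, hin⟩).symm
  · rintro ⟨t, ht⟩
    have hlen : t.numLeaves = n + 1 := by rw [← pl_length, ht, Lv_length]
    refine ⟨t, hlen, fun i => ?_⟩
    have hi : (i : ℕ) < t.depths.length := by
      rw [show t.depths.length = t.numLeaves from rfl, hlen]; exact i.isLt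
    have h2 : (i : ℕ) < (pl t).length := by rw [pl_length, hlen]; exact i.isLt
    have h3 : (i : ℕ) < (Lv v).length := by rw [Lv_length]; exact i.isLt
    calc ((v i : Fin 2) : ℕ) = (Lv v)[(i : ℕ)] := by simp only [Lv, List.getElem_ofFn]
      _ = (pl t)[(i : ℕ)] := (List.getElem_of_eq ht.symm h3).symm.symm
      _ = t.depths[(i : ℕ)] % 2 := by simp [pl]
      _ = t.depths.getD i 0 % 2 := by rw [List.getD_eq_getElem _ _ hi]

lemma s_Lv_iff {n r : ℕ} (hrle : r ≤ n + 1) (v : Fin (n + 1) → Fin 2)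
    (hr : (Finset.univ.filter (fun i => v i = 0)).card = r) :
    (s (Lv v) = 1) ↔ (n + r) % 3 = 1 := by
  have hcard : (Finset.univ.filter (fun i => ¬ v i = 0)).card = n + 1 - r := by
    have h := Finset.card_filter_add_card_filter_not
      (s := (Finset.univ : Finset (Fin (n + 1)))) (p := fun i => v i = 0)
    rw [hr, Finset.card_univ, Fintype.card_fin] at h
    omega
  have hs : s (Lv v) = (r : ZMod 3) + ((n + 1 - r : ℕ) : ZMod 3) * (-1) := by
    have h0 : s (Lv v) = ∑ i : Fin (n + 1), (-1 : ZMod 3) ^ ((v i : ℕ)) := by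
      simp only [Lv, s, List.map_ofFn, List.sum_ofFn, Function.comp]
    rw [h0, ← Finset.sum_filter_add_sum_filter_not Finset.univ (fun i => v i = 0)]
    have e1 : ∑ i ∈ Finset.univ.filter (fun i => v i = 0), (-1 : ZMod 3) ^ ((v i : ℕ))
        = (r : ZMod 3) := by
      rw [Finset.sum_congr rfl (g := fun _ => (1 : ZMod 3)) (fun i hi => by
        have hz : v i = 0 := (Finset.mem_filter.1 hi).2
        rw [hz]
        rfl)]
      rw [Finset.sum_const, hr, nsmul_eq_mul, mul_one]
    have e2 : ∑ i ∈ Finset.univ.filter (fun i => ¬ v i = 0), (-1 : ZMod 3) ^ ((v i : ℕ))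
        = ((n + 1 - r : ℕ) : ZMod 3) * (-1) := by
      rw [Finset.sum_congr rfl (g := fun _ => (-1 : ZMod 3)) (fun i hi => by
        have hz : ¬ v i = 0 := (Finset.mem_filter.1 hi).2
        have h1 : ((v i) : ℕ) = 1 := by
          have := (v i).isLt
          have h2 : ((v i) : ℕ) ≠ 0 := fun hc => hz (Fin.ext hc)
          omega
        rw [h1, pow_one])]
      rw [Finset.sum_const, hcard, nsmul_eq_mul]
    rw [e1, e2]
  rw [hs]
  have h3 : (3 : ZMod 3) = 0 := rfl
  have key : ((r : ZMod 3) + ((n + 1 - r : ℕ) : ZMod 3) * (-1) = 1) ↔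
      (((r + 2 * (n + 1 - r) + 2 : ℕ) : ZMod 3) = 0) := by
    constructor
    · intro h
      push_cast
      linear_combination h + (((n + 1 - r : ℕ) : ZMod 3) + 1) * h3
    · intro h
      push_cast at h
      linear_combination h - (((n + 1 - r : ℕ) : ZMod 3) + 1) * h3
  rw [key, ZMod.natCast_eq_zero_iff]
  omega

lemma Lv_eq_B_iff {n : ℕ} (v : Fin (n + 1) → Fin 2) (k : ℕ) :
    Lv v = B k ↔ (n + 1 = 2 * k + 1 ∧ ∀ i : Fin (n + 1), (v i : ℕ) = (i : ℕ) % 2) := by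
  constructor
  · intro h
    have hlen : n + 1 = 2 * k + 1 := by rw [← Lv_length v, h, B_length]
    refine ⟨hlen, fun i => ?_⟩
    have hi : (i : ℕ) < (Lv v).length := by rw [Lv_length]; exact i.isLt
    have hg := congrArg (fun l => l.getD (i : ℕ) 0) h
    rw [List.getD_eq_getElem _ _ hi] at hg
    simp only [Lv, List.getElem_ofFn] at hg
    rw [B_getD k (i : ℕ) (by omega)] at hg
    simpa using hg
  · rintro ⟨hlen, hv⟩
    apply List.ext_getElem (by rw [Lv_length, B_length]; omega)
    intro i h1 h2
    rw [B_length] at h2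
    simp only [Lv, List.getElem_ofFn]
    rw [← List.getD_eq_getElem (B k) 0 (by rw [B_length]; omega), B_getD k i (by omega)]
    exact hv ⟨i, by omega⟩

lemma evens_card (m : ℕ) : ((Finset.range m).filter (fun i => i % 2 = 0)).card = (m + 1) / 2 := by
  induction m with
  | zero => rfl
  | succ m ih =>
    rw [Finset.range_add_one, Finset.filter_insert]
    by_cases h : m % 2 = 0
    · rw [if_pos h, Finset.card_insert_of_notMem (by simp), ih]
      omega
    · rw [if_neg h, ih]
      omega

lemma fin_evens (m : ℕ) :
    ((Finset.univ : Finset (Fin m)).filter (fun i : Fin m => (i : ℕ) % 2 = 0)).card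
      = (m + 1) / 2 := by
  rw [← evens_card m,
    ← Finset.card_image_of_injective
      ((Finset.univ : Finset (Fin m)).filter (fun i : Fin m => (i : ℕ) % 2 = 0))
      Fin.val_injective]
  congr 1
  ext b
  simp only [Finset.mem_image, Finset.mem_filter, Finset.mem_univ, true_and, Finset.mem_range]
  constructor
  · rintro ⟨a, ha, rfl⟩
    exact ⟨a.isLt, ha⟩
  · rintro ⟨hb, h2⟩
    exact ⟨⟨b, hb⟩, h2, rfl⟩

lemma count_all (n r : ℕ) :
    ((Finset.univ : Finset (Fin (n + 1) → Fin 2)).filter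
      (fun v => (Finset.univ.filter (fun i => v i = 0)).card = r)).card = (n + 1).choose r := by
  have h1 : (n + 1).choose r
      = (Finset.powersetCard r (Finset.univ : Finset (Fin (n + 1)))).card := by
    rw [Finset.card_powersetCard, Finset.card_univ, Fintype.card_fin]
  rw [h1]
  apply Finset.card_bij (fun v _ => Finset.univ.filter (fun i => v i = 0))
  · intro v hv
    rw [Finset.mem_powersetCard]
    exact ⟨Finset.filter_subset _ _, (Finset.mem_filter.1 hv).2⟩
  · intro v1 h1 v2 h2 h
    funext i
    have hiff := Finset.ext_iff.1 h i
    simp only [Finset.mem_filter, Finset.mem_univ, true_and] at hiff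
    have a1 : ((v1 i : Fin 2) : ℕ) < 2 := (v1 i).isLt
    have a2 : ((v2 i : Fin 2) : ℕ) < 2 := (v2 i).isLt
    have hiff' : ((v1 i : Fin 2) : ℕ) = 0 ↔ ((v2 i : Fin 2) : ℕ) = 0 := by
      constructor
      · intro hh; exact congrArg Fin.val (hiff.1 (Fin.ext hh))
      · intro hh; exact congrArg Fin.val (hiff.2 (Fin.ext hh))
    exact Fin.ext (by omega)
  · intro S hS
    rw [Finset.mem_powersetCard] at hS
    have hfil : Finset.univ.filter (fun i => (if i ∈ S then (0 : Fin 2) else 1) = 0) = S := by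
      ext i
      simp only [Finset.mem_filter, Finset.mem_univ, true_and]
      by_cases h : i ∈ S
      · simp [h]
      · simp [h]
    exact ⟨fun i => if i ∈ S then 0 else 1,
      Finset.mem_filter.2 ⟨Finset.mem_univ _, by rw [hfil]; exact hS.2⟩, hfil⟩

def bv (n : ℕ) : Fin (n + 1) → Fin 2 := fun i => ⟨(i : ℕ) % 2, Nat.mod_lt _ (by omega)⟩

lemma bv_val {n : ℕ} (i : Fin (n + 1)) : ((bv n i : Fin 2) : ℕ) = (i : ℕ) % 2 := rfl

end Stmt11

open Stmt11

theorem stmt11 (n r : ℕ) (hn : 1 ≤ n) (hr : r ≤ n + 1) :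
    Nat.card {v : Fin (n + 1) → Fin 2 //
        (∃ t : BTree, t.numLeaves = n + 1 ∧
          ∀ i : Fin (n + 1), (v i : ℕ) = t.depths.getD i 0 % 2) ∧
        (Finset.univ.filter (fun i => v i = 0)).card = r} =
      if (n + r) % 3 = 1 then
        (if n + 2 = 2 * r then Nat.choose (n + 1) r - 1 else Nat.choose (n + 1) r)
      else 0 := by
  classical
  have hcard : Nat.card {v : Fin (n + 1) → Fin 2 //
      (∃ t : BTree, t.numLeaves = n + 1 ∧
        ∀ i : Fin (n + 1), (v i : ℕ) = t.depths.getD i 0 % 2) ∧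
      (Finset.univ.filter (fun i => v i = 0)).card = r} =
      (Finset.univ.filter (fun v : Fin (n + 1) → Fin 2 =>
        (∃ t : BTree, t.numLeaves = n + 1 ∧
          ∀ i : Fin (n + 1), (v i : ℕ) = t.depths.getD i 0 % 2) ∧
        (Finset.univ.filter (fun i => v i = 0)).card = r)).card := by
    rw [Nat.card_eq_fintype_card, Fintype.card_subtype]
  rw [hcard]
  clear hcard
  by_cases h3 : (n + r) % 3 = 1
  · rw [if_pos h3]
    by_cases h2 : n + 2 = 2 * r
    · rw [if_pos h2]
      have hr2 : 2 ≤ r := by omega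
      have hrr : r - 1 = r - 2 + 1 := by omega
      have hlen2 : n + 1 = 2 * (r - 1) + 1 := by omega
      have hdiv : (n + 1 + 1) / 2 = r := by omega
      have hbvzeros : (Finset.univ.filter
          (fun i => bv n i = 0)).card = r := by
        have he : (Finset.univ.filter
            (fun i => bv n i = 0))
            = (Finset.univ.filter (fun i : Fin (n + 1) => (i : ℕ) % 2 = 0)) := by
          apply Finset.filter_congr
          intro i _
          constructor
          · intro h; exact congrArg Fin.val h
          · intro h; exact Fin.ext h
        rw [he, fin_evens, hdiv]
      have hbvB : Lv (bv n)
          = B (r - 1) := by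
        rw [Lv_eq_B_iff]
        exact ⟨hlen2, fun i => rfl⟩
      have hset : (Finset.univ.filter (fun v : Fin (n + 1) → Fin 2 =>
            (∃ t : BTree, t.numLeaves = n + 1 ∧
              ∀ i : Fin (n + 1), (v i : ℕ) = t.depths.getD i 0 % 2) ∧
            (Finset.univ.filter (fun i => v i = 0)).card = r))
          = (Finset.univ.filter (fun v : Fin (n + 1) → Fin 2 =>
              (Finset.univ.filter (fun i => v i = 0)).card = r)).erase
            (bv n) := by
        ext v
        rw [Finset.mem_erase, Finset.mem_filter, Finset.mem_filter]
        constructor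
        · rintro ⟨hu, hP, hzero⟩
          refine ⟨?_, hu, hzero⟩
          rintro rfl
          rw [P_iff, realize_iff _ (Lv_lt_two _)] at hP
          exact hP.2 (r - 2) (by rw [hbvB, hrr])
        · rintro ⟨hne, hu, hzero⟩
          refine ⟨hu, ?_, hzero⟩
          rw [P_iff, realize_iff _ (Lv_lt_two v)]
          refine ⟨(s_Lv_iff hr v hzero).2 h3, fun k hk => hne ?_⟩
          rw [Lv_eq_B_iff] at hk
          funext i
          exact Fin.ext ((hk.2 i).trans (bv_val i).symm)
      have hmem : bv n ∈ Finset.univ.filter (fun v : Fin (n + 1) → Fin 2 =>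
          (Finset.univ.filter (fun i => v i = 0)).card = r) :=
        Finset.mem_filter.2 ⟨Finset.mem_univ _, hbvzeros⟩
      rw [hset, Finset.card_erase_of_mem hmem, count_all n r]
    · rw [if_neg h2]
      have hset : (Finset.univ.filter (fun v : Fin (n + 1) → Fin 2 =>
            (∃ t : BTree, t.numLeaves = n + 1 ∧
              ∀ i : Fin (n + 1), (v i : ℕ) = t.depths.getD i 0 % 2) ∧
            (Finset.univ.filter (fun i => v i = 0)).card = r))
          = (Finset.univ.filter (fun v : Fin (n + 1) → Fin 2 =>
              (Finset.univ.filter (fun i => v i = 0)).card = r)) := by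
        ext v
        rw [Finset.mem_filter, Finset.mem_filter]
        constructor
        · rintro ⟨hu, _, hzero⟩
          exact ⟨hu, hzero⟩
        · rintro ⟨hu, hzero⟩
          refine ⟨hu, ?_, hzero⟩
          rw [P_iff, realize_iff _ (Lv_lt_two v)]
          refine ⟨(s_Lv_iff hr v hzero).2 h3, fun k hk => ?_⟩
          rw [Lv_eq_B_iff] at hk
          obtain ⟨hlen, hv⟩ := hk
          have he : (Finset.univ.filter (fun i => v i = 0))
              = (Finset.univ.filter (fun i : Fin (n + 1) => (i : ℕ) % 2 = 0)) := by
            apply Finset.filter_congr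
            intro i _
            constructor
            · intro h
              have h0 := congrArg Fin.val h
              rw [hv i] at h0
              exact h0
            · intro h
              apply Fin.ext
              rw [hv i]
              exact h
          rw [he, fin_evens] at hzero
          clear he hv
          omega
      rw [hset, count_all n r]
  · rw [if_neg h3]
    have hset : (Finset.univ.filter (fun v : Fin (n + 1) → Fin 2 =>
          (∃ t : BTree, t.numLeaves = n + 1 ∧
            ∀ i : Fin (n + 1), (v i : ℕ) = t.depths.getD i 0 % 2) ∧
          (Finset.univ.filter (fun i => v i = 0)).card = r)) = ∅ := by
      rw [Finset.filter_eq_empty_iff]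
      rintro v _ ⟨hP, hzero⟩
      rw [P_iff, realize_iff _ (Lv_lt_two v)] at hP
      exact h3 ((s_Lv_iff hr v hzero).1 hP.1)
    rw [hset, Finset.card_empty]
end

section
/- For n ≥ 1, the number of admissible binary sequences in {0,1}^{n+1} equals A_n, where A_1 = 1 and A_n = 2^n - 1 - A_{n-1} for n ≥ 2. -/
open Finset
open Fin.NatCast

/-- number of zeros -/
def Zf {m : ℕ} (v : Fin m → Fin 2) : ℕ :=
  (Finset.univ.filter (fun i => v i = 0)).card

/-- count of sequences satisfying the mod-3 condition -/
def gC (n : ℕ) : ℕ :=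
  (Finset.univ.filter (fun v : Fin (n + 1) → Fin 2 => (n + Zf v) % 3 = 1)).card

lemma Zf_cons {n : ℕ} (b : Fin 2) (w : Fin n → Fin 2) :
    Zf (Fin.cons b w) = (if b = 0 then 1 else 0) + Zf w := by
  unfold Zf
  rw [card_filter, card_filter, Fin.sum_univ_succ]
  simp

lemma g_rec (n : ℕ) : gC (n + 1) + gC n = 2 ^ (n + 1) := by
  have h1 : gC (n + 1) = ∑ x : Fin 2 × (Fin (n + 1) → Fin 2),
      if ((n + 1) + Zf (Fin.cons x.1 x.2)) % 3 = 1 then 1 else 0 := by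
    rw [gC, card_filter]
    exact (Fintype.sum_equiv (Fin.consEquiv (fun _ => Fin 2))
      (fun x => if ((n + 1) + Zf (Fin.cons x.1 x.2)) % 3 = 1 then 1 else 0)
      (fun v => if ((n + 1) + Zf v) % 3 = 1 then 1 else 0)
      (fun x => rfl)).symm
  rw [h1, Fintype.sum_prod_type, Finset.sum_comm, gC, card_filter]
  rw [← Finset.sum_add_distrib]
  have h2 : ∀ w : Fin (n + 1) → Fin 2,
      ((∑ b : Fin 2, if ((n + 1) + Zf (Fin.cons b w)) % 3 = 1 then 1 else 0) +
        (if (n + Zf w) % 3 = 1 then 1 else 0)) = 1 := by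
    intro w
    rw [Fin.sum_univ_two, Zf_cons, Zf_cons]
    norm_num
    split_ifs <;> omega
  rw [Finset.sum_congr rfl (fun w _ => h2 w)]
  simp [Finset.card_univ, mul_comm]

/-- the alternating sequences -/
def altS (n : ℕ) (b : Fin 2) : Fin (n + 1) → Fin 2 := fun i => b + (i.val : Fin 2)

lemma fin2_ne {a b : Fin 2} (h : a ≠ b) : a = b + 1 := by
  fin_cases a <;> fin_cases b <;> simp_all

lemma alt_eq {n : ℕ} (v : Fin (n + 1) → Fin 2)
    (h : ∀ j : Fin n, v j.castSucc ≠ v j.succ) : v = altS n (v 0) := by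
  funext i
  induction i using Fin.induction with
  | zero => simp [altS]
  | succ i ih =>
    have h2 : v i.succ = v i.castSucc + 1 := fin2_ne (fun e => h i e.symm)
    rw [h2, ih, altS, altS]
    simp [Fin.val_succ]
    exact add_assoc _ _ _
lemma alt_alt {n : ℕ} (b : Fin 2) (j : Fin n) :
    altS n b j.castSucc ≠ altS n b j.succ := by
  simp only [altS, Fin.coe_castSucc, Fin.val_succ]
  push_cast
  intro h
  have := add_left_cancel h
  have h2 : ((j.val : Fin 2) : Fin 2) ≠ (j.val : Fin 2) + 1 := by
    generalize ((j.val : ℕ) : Fin 2) = x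
    fin_cases x <;> decide
  exact h2 this

lemma cnt2 (m : ℕ) : ((∑ i : Fin m, if i.val % 2 = 0 then 1 else 0) = (m + 1) / 2)
    ∧ ((∑ i : Fin m, if i.val % 2 = 1 then 1 else 0) = m / 2) := by
  induction m with
  | zero => simp
  | succ m ih =>
    rw [Fin.sum_univ_castSucc, Fin.sum_univ_castSucc]
    simp only [Fin.val_last, Fin.coe_castSucc]
    rcases ih with ⟨h0, h1⟩
    rw [h0, h1]
    constructor <;> split_ifs <;> omega

lemma Zf_alt (n : ℕ) (b : Fin 2) :
    Zf (altS n b) = if b = 0 then (n + 2) / 2 else (n + 1) / 2 := by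
  have haux : ∀ b x : Fin 2, (b + x = 0 ↔ x = b) := by decide
  have key : ∀ i : Fin (n + 1), (altS n b i = 0) ↔ (i.val % 2 = b.val) := by
    intro i
    unfold altS
    rw [haux, Fin.ext_iff, Fin.val_natCast]
  unfold Zf
  obtain ⟨h0, h1⟩ := cnt2 (n + 1)
  have hb : b = 0 ∨ b = 1 := by omega
  rcases hb with hb | hb <;> subst hb <;>
    simp only [Fin.val_zero, Fin.val_one] at key <;>
    rw [card_filter, Finset.sum_congr rfl (fun i _ => by rw [if_congr (key i) rfl rfl])]
  · rw [if_pos rfl, h0]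
  · rw [if_neg (by decide), h1]

/-- count of sequences satisfying mod-3 condition and alternating -/
def cC (n : ℕ) : ℕ :=
  (Finset.univ.filter (fun v : Fin (n + 1) → Fin 2 =>
    (n + Zf v) % 3 = 1 ∧ ∀ j : Fin n, v j.castSucc ≠ v j.succ)).card

lemma altS_ne (n : ℕ) : altS n 0 ≠ altS n 1 := by
  intro h
  have := congrFun h 0
  simp [altS] at this

lemma cC_val (n : ℕ) : cC n = if n % 2 = 0 then 1 else 0 := by
  have hset : (Finset.univ.filter (fun v : Fin (n + 1) → Fin 2 =>
      (n + Zf v) % 3 = 1 ∧ ∀ j : Fin n, v j.castSucc ≠ v j.succ)) =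
      ({altS n 0, altS n 1} : Finset (Fin (n + 1) → Fin 2)).filter
        (fun v => (n + Zf v) % 3 = 1) := by
    ext v
    simp only [mem_filter, mem_univ, true_and, mem_insert, mem_singleton]
    have h01 : ∀ x : Fin 2, x = 0 ∨ x = 1 := by decide
    constructor
    · rintro ⟨hp, ha⟩
      refine ⟨?_, hp⟩
      have hv := alt_eq v ha
      rcases h01 (v 0) with h | h <;> rw [h] at hv
      · left; exact hv
      · right; exact hv
    · rintro ⟨hv, hp⟩
      refine ⟨hp, ?_⟩
      rcases hv with h | h <;> subst h <;> exact fun j => alt_alt _ j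
  rw [cC, hset, card_filter]
  rw [show ({altS n 0, altS n 1} : Finset (Fin (n + 1) → Fin 2)) =
    insert (altS n 0) {altS n 1} from rfl]
  rw [Finset.sum_insert (by simp [altS_ne n]), Finset.sum_singleton]
  rw [Zf_alt, Zf_alt]
  norm_num
  split_ifs <;> omega

instance admDec {n : ℕ} : DecidablePred (@AdmissibleSeq n) := fun v => by
  unfold AdmissibleSeq; infer_instance

/-- count of admissible sequences -/
def NC (n : ℕ) : ℕ :=
  (Finset.univ.filter (fun v : Fin (n + 1) → Fin 2 => AdmissibleSeq v)).card

lemma split_lemma (n : ℕ) (hn : 1 ≤ n) : NC n + cC n = gC n := by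
  have hadm : (Finset.univ.filter (fun v : Fin (n + 1) → Fin 2 => AdmissibleSeq v)) =
      (Finset.univ.filter (fun v : Fin (n + 1) → Fin 2 => (n + Zf v) % 3 = 1)).filter
        (fun v => ∃ j : Fin n, v j.castSucc = v j.succ) := by
    ext v
    simp only [mem_filter, mem_univ, true_and]; simp only [AdmissibleSeq, Zf]
    constructor
    · rintro ⟨he, hp⟩; exact ⟨hp, he hn⟩
    · rintro ⟨hp, he⟩; exact ⟨fun _ => he, hp⟩
  have hc : (Finset.univ.filter (fun v : Fin (n + 1) → Fin 2 =>
      (n + Zf v) % 3 = 1 ∧ ∀ j : Fin n, v j.castSucc ≠ v j.succ)) =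
      (Finset.univ.filter (fun v : Fin (n + 1) → Fin 2 => (n + Zf v) % 3 = 1)).filter
        (fun v => ¬ ∃ j : Fin n, v j.castSucc = v j.succ) := by
    rw [Finset.filter_filter]
    apply Finset.filter_congr
    intro v _
    push_neg
    tauto
  rw [NC, cC, hadm, hc, gC]
  exact Finset.card_filter_add_card_filter_not _

lemma gC_zero : gC 0 = 1 := by decide

theorem stmt12 (A : ℕ → ℕ) (h1 : A 1 = 1)
    (hrec : ∀ n, 2 ≤ n → A n = 2 ^ n - 1 - A (n - 1)) :
    ∀ n, 1 ≤ n →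
      Nat.card {v : Fin (n + 1) → Fin 2 // AdmissibleSeq v} = A n := by
  have hcard : ∀ n : ℕ, Nat.card {v : Fin (n + 1) → Fin 2 // AdmissibleSeq v} = NC n := by
    intro n
    rw [Nat.card_eq_fintype_card, NC, Fintype.card_subtype]
  have key : ∀ n, 1 ≤ n → NC n = A n := by
    intro n hn
    induction n, hn using Nat.le_induction with
    | base =>
      have hs := split_lemma 1 le_rfl
      have hg := g_rec 0
      rw [gC_zero] at hg
      rw [cC_val] at hs
      norm_num at hg hs
      omega
    | succ n hn ih =>
      have hs1 := split_lemma n hn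
      have hs2 := split_lemma (n + 1) (by omega)
      have hg := g_rec n
      rw [cC_val] at hs1 hs2
      have hA : A (n + 1) = 2 ^ (n + 1) - 1 - A n := by
        have := hrec (n + 1) (by omega)
        simpa using this
      have hp : 0 < 2 ^ (n + 1) := Nat.pow_pos (by omega)
      rw [hA, ← ih]
      split_ifs at hs1 hs2 <;> omega
  intro n hn
  rw [hcard n, key n hn]
end

section
/- For n ≥ 2: (sum of C(n+1,r) over r ≡ 1-n mod 3, 0 ≤ r ≤ n+1) + (sum of C(n,r) over r ≡ 2-n mod 3, 0 ≤ r ≤ n) = 2^n. -/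
theorem stmt16 (n : ℕ) (hn : 2 ≤ n) :
    (∑ r ∈ (Finset.range (n + 2)).filter (fun r => (r + n) % 3 = 1),
        Nat.choose (n + 1) r) +
      (∑ r ∈ (Finset.range (n + 1)).filter (fun r => (r + n) % 3 = 2),
        Nat.choose n r) = 2 ^ n := by
  rw [Finset.sum_filter, Finset.sum_filter]
  have hA : (∑ r ∈ Finset.range (n + 2), if (r + n) % 3 = 1 then Nat.choose (n+1) r else 0)
      = (∑ i ∈ Finset.range (n+1), if (i + n) % 3 = 0 then Nat.choose n i else 0)
        + (∑ i ∈ Finset.range (n+1), if (i + n) % 3 = 1 then Nat.choose n i else 0) := by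
    rw [Finset.sum_range_succ']
    have step : ∀ i ∈ Finset.range (n+1),
        (if (i + 1 + n) % 3 = 1 then Nat.choose (n+1) (i+1) else 0)
        = (if (i + n) % 3 = 0 then Nat.choose n i else 0)
          + (if (i + n) % 3 = 0 then Nat.choose n (i+1) else 0) := by
      intro i _
      by_cases h : (i + n) % 3 = 0
      · have h' : (i + 1 + n) % 3 = 1 := by omega
        simp [h, h', Nat.choose_succ_succ]
      · have h' : ¬ (i + 1 + n) % 3 = 1 := by omega
        simp [h, h']
    rw [Finset.sum_congr rfl step, Finset.sum_add_distrib]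
    have hB : (∑ i ∈ Finset.range (n+1), if (i + n) % 3 = 0 then Nat.choose n (i+1) else 0)
        + (if (0 + n) % 3 = 1 then Nat.choose (n+1) 0 else 0)
        = ∑ i ∈ Finset.range (n+1), if (i + n) % 3 = 1 then Nat.choose n i else 0 := by
      rw [Finset.sum_range_succ' (fun i => if (i + n) % 3 = 1 then Nat.choose n i else 0)]
      rw [Finset.sum_range_succ (fun i => if (i + n) % 3 = 0 then Nat.choose n (i+1) else 0)]
      have step2 : ∀ i ∈ Finset.range n,
          (if (i + n) % 3 = 0 then Nat.choose n (i+1) else 0)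
          = (if (i + 1 + n) % 3 = 1 then Nat.choose n (i+1) else 0) := by
        intro i _
        by_cases h : (i + n) % 3 = 0
        · have h' : (i + 1 + n) % 3 = 1 := by omega
          simp [h, h']
        · have h' : ¬ (i + 1 + n) % 3 = 1 := by omega
          simp [h, h']
      rw [Finset.sum_congr rfl step2]
      simp [Nat.choose_succ_self]
    omega
  rw [hA]
  have hTot : (∑ i ∈ Finset.range (n+1), if (i + n) % 3 = 0 then Nat.choose n i else 0)
      + (∑ i ∈ Finset.range (n+1), if (i + n) % 3 = 1 then Nat.choose n i else 0)
      + (∑ i ∈ Finset.range (n+1), if (i + n) % 3 = 2 then Nat.choose n i else 0)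
      = 2 ^ n := by
    rw [← Nat.sum_range_choose n, ← Finset.sum_add_distrib, ← Finset.sum_add_distrib]
    refine Finset.sum_congr rfl fun i _ => ?_
    have h : (i + n) % 3 = 0 ∨ (i + n) % 3 = 1 ∨ (i + n) % 3 = 2 := by omega
    rcases h with h | h | h <;> simp [h]
  omega
end

section
/- For n ≥ 0, the set of values obtained by all parenthesizations of x_0 ⊖ x_1 ⊖ ⋯ ⊖ x_n (as functions of the indeterminates) is exactly the set of linear forms Σ_{i=0}^n (-1)^{d_i} x_i over all admissible sequences (d_0,...,d_n) ∈ {0,1}^{n+1}. -/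
namespace S19

/-- signed sum of a list of exponents -/
def lsum (x : ℕ → ℤ) : List ℕ → ℕ → ℤ
  | [], _ => 0
  | d :: D, k => (-1)^d * x k + lsum x D (k+1)

lemma lsum_append (x : ℕ → ℤ) (A B : List ℕ) (k : ℕ) :
    lsum x (A ++ B) k = lsum x A k + lsum x B (k + A.length) := by
  induction A generalizing k with
  | nil => simp [lsum]
  | cons a A ih => simp [lsum, ih, add_assoc, add_comm 1 A.length]

lemma lsum_map_succ (x : ℕ → ℤ) (A : List ℕ) (k : ℕ) :
    lsum x (A.map (· + 1)) k = - lsum x A k := by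
  induction A generalizing k with
  | nil => simp [lsum]
  | cons a A ih => simp [lsum, ih, pow_succ]; ring

lemma eval_eq_lsum (x : ℕ → ℤ) (t : BTree) (k : ℕ) :
    t.eval x k = lsum x t.depths k := by
  induction t generalizing k with
  | leaf => simp [BTree.eval, BTree.depths, lsum]
  | node l r ihl ihr =>
      simp only [BTree.eval, BTree.depths, lsum_map_succ, lsum_append, ihl, ihr,
        BTree.numLeaves]
      ring

lemma neg_one_pow_mod_two (d : ℕ) : ((-1 : ℤ))^(d % 2) = (-1)^d := by
  rcases Nat.even_or_odd d with h | h
  · rw [Nat.even_iff.mp h, pow_zero, h.neg_one_pow]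
  · rw [Nat.odd_iff.mp h, pow_one, h.neg_one_pow]

lemma lsum_mod_two (x : ℕ → ℤ) (A : List ℕ) (k : ℕ) :
    lsum x (A.map (· % 2)) k = lsum x A k := by
  induction A generalizing k with
  | nil => rfl
  | cons a A ih => simp [lsum, ih, neg_one_pow_mod_two]

lemma lsum_ofFn (x : ℕ → ℤ) {m : ℕ} (g : Fin m → ℕ) (k : ℕ) :
    lsum x (List.ofFn g) k = ∑ i : Fin m, (-1)^(g i) * x (k + i) := by
  induction m generalizing k with
  | zero => simp [lsum]
  | succ m ih =>
      rw [List.ofFn_succ, Fin.sum_univ_succ]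
      simp only [lsum, ih, Fin.val_succ, Fin.val_zero, Nat.add_zero]
      congr 1
      apply Finset.sum_congr rfl; intro i _; congr 2; omega

-- PART 2


/-- parity list of a tree -/
def P (t : BTree) : List ℕ := t.depths.map (· % 2)

/-- number of zeros -/
def Z (L : List ℕ) : ℕ := L.countP (· = 0)

lemma length_P (t : BTree) : (P t).length = t.numLeaves := by
  simp [P, BTree.numLeaves]

lemma P_lt_two (t : BTree) : ∀ d ∈ P t, d < 2 := by
  intro d hd
  simp only [P, List.mem_map] at hd
  obtain ⟨e, _, rfl⟩ := hd; omega

lemma P_node (l r : BTree) :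
    P (.node l r) = (P l).map (fun b => 1 - b) ++ (P r).map (fun b => 1 - b) := by
  simp only [P, BTree.depths, List.map_append, List.map_map]
  congr 1 <;> (apply List.map_congr_left; intro a _; simp [Function.comp]; omega)

lemma Z_flip (L : List ℕ) (h : ∀ d ∈ L, d < 2) :
    Z (L.map (fun b => 1 - b)) = L.length - Z L := by
  induction L with
  | nil => rfl
  | cons a A ih =>
      have ha : a < 2 := h a (by simp)
      have hA := ih (fun d hd => h d (by simp [hd]))
      have hZ : Z A ≤ A.length := List.countP_le_length
      simp only [Z, List.map_cons, List.countP_cons, List.length_cons] at *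
      interval_cases a <;> simp at * <;> omega

lemma Z_le (L : List ℕ) : Z L ≤ L.length := List.countP_le_length

lemma numLeaves_pos (t : BTree) : 1 ≤ t.numLeaves := by
  induction t with
  | leaf => simp [BTree.numLeaves, BTree.depths]
  | node l r ihl ihr =>
      simp only [BTree.numLeaves, BTree.depths, List.length_map, List.length_append] at *
      omega

lemma getD_map_lt (L : List ℕ) (f : ℕ → ℕ) (j : ℕ) (h : j < L.length) :
    (L.map f).getD j 0 = f (L.getD j 0) := by
  rw [List.getD_eq_getElem _ _ (by simpa), List.getElem_map, List.getD_eq_getElem _ _ h]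

/-- the mod-3 invariant -/
lemma invariant (t : BTree) : (t.numLeaves + Z (P t)) % 3 = 2 := by
  induction t with
  | leaf => rfl
  | node l r ihl ihr =>
      have hl := Z_le (P l); have hr := Z_le (P r)
      rw [length_P] at hl hr
      have hnl : (BTree.node l r).numLeaves = l.numLeaves + r.numLeaves := by
        simp [BTree.numLeaves, BTree.depths]
      have f1 := Z_flip (P l) (P_lt_two l)
      have f2 := Z_flip (P r) (P_lt_two r)
      rw [length_P] at f1 f2
      rw [P_node, hnl]
      have hs : Z ((P l).map (fun b => 1 - b) ++ (P r).map (fun b => 1 - b)) =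
          Z ((P l).map (fun b => 1 - b)) + Z ((P r).map (fun b => 1 - b)) := by
        simp [Z, List.countP_append]
      rw [hs, f1, f2]
      omega

/-- trees with one leaf are leaves (in terms of depths) -/
lemma depths_of_numLeaves_one (t : BTree) (h : t.numLeaves = 1) : t.depths = [0] := by
  cases t with
  | leaf => rfl
  | node l r =>
      exfalso
      have h1 := numLeaves_pos l; have h2 := numLeaves_pos r
      simp [BTree.numLeaves, BTree.depths] at h
      simp [BTree.numLeaves] at h1 h2
      omega

def HasPair (L : List ℕ) : Prop := ∃ j, j + 1 < L.length ∧ L.getD j 0 = L.getD (j+1) 0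

lemma hasPair_map (L : List ℕ) (f : ℕ → ℕ) (h : HasPair L) : HasPair (L.map f) := by
  obtain ⟨j, hj, he⟩ := h
  refine ⟨j, by simpa using hj, ?_⟩
  rw [getD_map_lt _ _ _ (by omega), getD_map_lt _ _ _ hj, he]

lemma hasPair_append_left (A B : List ℕ) (h : HasPair A) : HasPair (A ++ B) := by
  obtain ⟨j, hj, he⟩ := h
  exact ⟨j, by simp; omega, by rw [List.getD_append A B 0 j (by omega), List.getD_append A B 0 (j+1) hj, he]⟩

lemma hasPair_append_right (A B : List ℕ) (h : HasPair B) : HasPair (A ++ B) := by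
  obtain ⟨j, hj, he⟩ := h
  refine ⟨A.length + j, by simp; omega, ?_⟩
  rw [List.getD_append_right A B 0 _ (by omega), show A.length + j + 1 = A.length + (j+1) by omega,
      List.getD_append_right A B 0 _ (by omega)]
  simpa using he

lemma tree_hasPair (t : BTree) (h : 2 ≤ t.numLeaves) : HasPair t.depths := by
  induction t with
  | leaf => simp [BTree.numLeaves, BTree.depths] at h
  | node l r ihl ihr =>
      rcases Nat.lt_or_ge l.numLeaves 2 with hl | hl
      · rcases Nat.lt_or_ge r.numLeaves 2 with hr | hr
        · have h1 := numLeaves_pos l; have h2 := numLeaves_pos r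
          have e1 : l.depths = [0] := depths_of_numLeaves_one l (by omega)
          have e2 : r.depths = [0] := depths_of_numLeaves_one r (by omega)
          rw [BTree.depths, e1, e2]
          exact ⟨0, by simp, rfl⟩
        · rw [BTree.depths]
          exact hasPair_map _ _ (hasPair_append_right _ _ (ihr hr))
      · rw [BTree.depths]
        exact hasPair_map _ _ (hasPair_append_left _ _ (ihl hl))

lemma tree_hasPair_P (t : BTree) (h : 2 ≤ t.numLeaves) : HasPair (P t) :=
  hasPair_map _ _ (tree_hasPair t h)


-- PART 3: expansion

def expandAt : BTree → ℕ → BTree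
  | .leaf, _ => .node .leaf .leaf
  | .node l r, k =>
      if k < l.numLeaves then .node (expandAt l k) r
      else .node l (expandAt r (k - l.numLeaves))

lemma depths_expandAt (t : BTree) (k : ℕ) (hk : k < t.numLeaves) :
    (expandAt t k).depths =
      t.depths.take k ++ [t.depths.getD k 0 + 1, t.depths.getD k 0 + 1]
        ++ t.depths.drop (k+1) := by
  induction t generalizing k with
  | leaf =>
      simp [BTree.numLeaves, BTree.depths] at hk
      subst hk
      simp [expandAt, BTree.depths, BTree.numLeaves]
  | node l r ihl ihr =>
      have hll : l.depths.length = l.numLeaves := rfl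
      have hrl : r.depths.length = r.numLeaves := rfl
      have e : (BTree.node l r).depths = (l.depths ++ r.depths).map (· + 1) := rfl
      rcases Nat.lt_or_ge k l.numLeaves with h | h
      · rw [expandAt, if_pos h]
        have hg : ((l.depths ++ r.depths).map (· + 1)).getD k 0 = l.depths.getD k 0 + 1 := by
          rw [getD_map_lt _ _ _ (by simp; omega), List.getD_append _ _ _ _ (by omega)]
        rw [show (BTree.node (expandAt l k) r).depths
              = ((expandAt l k).depths ++ r.depths).map (· + 1) from rfl,
            ihl k h, e, hg, ← List.map_take, ← List.map_drop,
            List.take_append_of_le_length (by omega),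
            List.drop_append_of_le_length (by omega)]
        simp [List.map_append, List.append_assoc]
      · rw [expandAt, if_neg (by omega)]
        obtain ⟨k', rfl⟩ : ∃ k', k = l.depths.length + k' := ⟨k - l.depths.length, by omega⟩
        have hk' : k' < r.numLeaves := by
          simp only [BTree.numLeaves, e, List.length_map, List.length_append] at hk
          omega
        have hk2 : l.depths.length + k' - l.numLeaves = k' := by omega
        have hg : ((l.depths ++ r.depths).map (· + 1)).getD (l.depths.length + k') 0
            = r.depths.getD k' 0 + 1 := by
          rw [getD_map_lt _ _ _ (by simp; omega),
              List.getD_append_right _ _ _ _ (by omega)]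
          simp
        rw [show (BTree.node l (expandAt r (l.depths.length + k' - l.numLeaves))).depths
              = (l.depths ++ (expandAt r (l.depths.length + k' - l.numLeaves)).depths).map (· + 1) from rfl,
            hk2, ihr k' hk', e, hg, ← List.map_take, ← List.map_drop, List.take_length_add_append,
            show l.depths.length + k' + 1 = l.depths.length + (k' + 1) by omega,
            List.drop_length_add_append]
        simp [List.map_append, List.append_assoc]

lemma numLeaves_expandAt (t : BTree) (k : ℕ) (hk : k < t.numLeaves) :
    (expandAt t k).numLeaves = t.numLeaves + 1 := by
  have := depths_expandAt t k hk
  have h1 : t.depths.length = t.numLeaves := rfl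
  simp only [BTree.numLeaves, this, List.length_append, List.length_take, List.length_drop,
    List.length_cons, List.length_nil] at *
  omega

/-- parity of expansion -/
lemma P_expandAt (t : BTree) (k : ℕ) (hk : k < t.numLeaves) :
    P (expandAt t k) =
      (P t).take k ++ [1 - (P t).getD k 0, 1 - (P t).getD k 0] ++ (P t).drop (k+1) := by
  have h1 : t.depths.length = t.numLeaves := rfl
  have hg : (P t).getD k 0 = t.depths.getD k 0 % 2 := by
    rw [P, getD_map_lt _ _ _ (by omega)]
  rw [P, depths_expandAt t k hk]
  simp only [List.map_append, List.map_take, List.map_drop, List.map_cons, List.map_nil]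
  rw [hg, ← P]
  have harr : (t.depths.getD k 0 + 1) % 2 = 1 - t.depths.getD k 0 % 2 := by omega
  rw [harr]


-- PART 4: contraction

def contract (L : List ℕ) (j : ℕ) : List ℕ :=
  L.take j ++ (1 - L.getD j 0) :: L.drop (j+2)

lemma length_take_of_lt {L : List ℕ} {j : ℕ} (h : j ≤ L.length) : (L.take j).length = j := by
  simp [List.length_take]; omega

lemma decomp (L : List ℕ) (j : ℕ) (h : j + 1 < L.length) :
    L = L.take j ++ L.getD j 0 :: L.getD (j+1) 0 :: L.drop (j+2) := by
  conv_lhs => rw [← List.take_append_drop j L]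
  congr 1
  rw [List.drop_eq_getElem_cons (by omega), List.drop_eq_getElem_cons (by omega),
      List.getD_eq_getElem _ _ (by omega), List.getD_eq_getElem _ _ (by omega)]

lemma length_contract (L : List ℕ) (j : ℕ) (h : j + 1 < L.length) :
    (contract L j).length = L.length - 1 := by
  simp [contract, List.length_take, List.length_drop]
  omega

lemma getD_mem (L : List ℕ) (j : ℕ) (h : j < L.length) : L.getD j 0 ∈ L := by
  rw [List.getD_eq_getElem _ _ h]; exact List.getElem_mem h

lemma contract_lt_two (L : List ℕ) (j : ℕ) (h2 : ∀ d ∈ L, d < 2) :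
    ∀ d ∈ contract L j, d < 2 := by
  intro d hd
  simp only [contract, List.mem_append, List.mem_cons] at hd
  rcases hd with h | h | h
  · exact h2 d (List.mem_of_mem_take h)
  · omega
  · exact h2 d (List.mem_of_mem_drop h)

lemma contract_getD_lt (L : List ℕ) (j i : ℕ) (hi : i < j) (hj : j + 1 < L.length) :
    (contract L j).getD i 0 = L.getD i 0 := by
  rw [contract, List.getD_append _ _ _ _ (by rw [length_take_of_lt (by omega)]; omega),
      List.getD_eq_getElem _ _ (by rw [length_take_of_lt (by omega)]; omega),
      List.getElem_take, ← List.getD_eq_getElem _ _ (by omega)]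

lemma contract_getD_self (L : List ℕ) (j : ℕ) (hj : j + 1 < L.length) :
    (contract L j).getD j 0 = 1 - L.getD j 0 := by
  rw [contract, List.getD_append_right _ _ _ _ (by rw [length_take_of_lt (by omega)]),
      length_take_of_lt (by omega)]
  simp

lemma contract_getD_gt (L : List ℕ) (j i : ℕ) (hj : j + 1 < L.length)
    (hb : j + 2 + i < L.length) :
    (contract L j).getD (j + 1 + i) 0 = L.getD (j + 2 + i) 0 := by
  rw [contract, List.getD_append_right _ _ _ _ (by rw [length_take_of_lt (by omega)]; omega),
      length_take_of_lt (by omega)]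
  have h1 : j + 1 + i - j = i + 1 := by omega
  rw [h1, List.getD_cons_succ, List.getD_eq_getElem _ _ (by simp [List.length_drop]; omega),
      List.getElem_drop, ← List.getD_eq_getElem _ _ (by omega)]

lemma Z_cons (c : ℕ) (B : List ℕ) :
    Z (c :: B) = Z B + (if c = 0 then 1 else 0) := by
  by_cases h : c = 0 <;> simp [Z, List.countP_cons, h] <;> try omega

lemma Z_two_piece (A : List ℕ) (c : ℕ) (B : List ℕ) :
    Z (A ++ c :: B) = Z A + Z B + (if c = 0 then 1 else 0) := by
  by_cases h : c = 0 <;> simp [Z, List.countP_append, List.countP_cons, h] <;> try omega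

lemma contract_getD_succ (L : List ℕ) (j : ℕ) (hj : j + 1 < L.length)
    (hb : j + 2 < L.length) :
    (contract L j).getD (j + 1) 0 = L.getD (j + 2) 0 := by
  have h := contract_getD_gt L j 0 hj (by omega)
  simpa using h

lemma mod3_contract (L : List ℕ) (j : ℕ) (hj : j + 1 < L.length)
    (h2 : ∀ d ∈ L, d < 2) (he : L.getD j 0 = L.getD (j+1) 0)
    (hm : (L.length - 1 + Z L) % 3 = 1) :
    ((contract L j).length - 1 + Z (contract L j)) % 3 = 1 := by
  have hd := decomp L j hj
  have hp2 : L.getD j 0 < 2 := h2 _ (getD_mem L j (by omega))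
  have hZL : Z L = Z (L.take j) + Z (L.drop (j+2)) + (if L.getD (j+1) 0 = 0 then 1 else 0)
      + (if L.getD j 0 = 0 then 1 else 0) := by
    conv_lhs => rw [hd]
    rw [Z_two_piece, Z_cons]
    ring
  have hZC : Z (contract L j) = Z (L.take j) + Z (L.drop (j+2))
      + (if 1 - L.getD j 0 = 0 then 1 else 0) := by
    rw [contract, Z_two_piece]
  rw [length_contract _ _ hj, hZC]
  rw [hZL, ← he] at hm
  interval_cases h : L.getD j 0 <;> simp [h] at hm ⊢ <;> omega

lemma choose (L : List ℕ) (h2 : ∀ d ∈ L, d < 2) (hlen : 3 ≤ L.length)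
    (hp : HasPair L) (hm : (L.length - 1 + Z L) % 3 = 1) :
    ∃ j, j + 1 < L.length ∧ L.getD j 0 = L.getD (j+1) 0 ∧ HasPair (contract L j) := by
  classical
  have hpd : ∃ j, j + 1 < L.length ∧ L.getD j 0 = L.getD (j+1) 0 := hp
  obtain ⟨j0, ⟨hj0lt, hj0eq⟩, hj0min⟩ :
      ∃ j0, (j0 + 1 < L.length ∧ L.getD j0 0 = L.getD (j0+1) 0) ∧
        ∀ i, i < j0 → ¬(i + 1 < L.length ∧ L.getD i 0 = L.getD (i+1) 0) :=
    ⟨Nat.find hpd, Nat.find_spec hpd, fun i hi => Nat.find_min hpd hi⟩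
  rcases Nat.eq_zero_or_pos j0 with hz | hpos
  · -- initial run case
    subst hz
    have hj01 : L.getD 0 0 = L.getD 1 0 := by simpa using hj0eq
    have hrun : ∃ i, ¬(i < L.length ∧ L.getD i 0 = L.getD 0 0) := ⟨L.length, by simp⟩
    obtain ⟨m, hrs, hrmin⟩ :
        ∃ m, ¬(m < L.length ∧ L.getD m 0 = L.getD 0 0) ∧
          ∀ i, i < m → i < L.length ∧ L.getD i 0 = L.getD 0 0 :=
      ⟨Nat.find hrun, Nat.find_spec hrun, fun i hi => by
        have h := Nat.find_min hrun hi; tauto⟩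
    have hm2 : 2 ≤ m := by
      by_contra h
      push_neg at h
      rcases (show m = 0 ∨ m = 1 by omega) with h0 | h1
      · subst h0; exact hrs ⟨by omega, rfl⟩
      · subst h1; exact hrs ⟨by omega, hj01.symm⟩
    have hmlen : m ≤ L.length := by
      by_contra h
      push_neg at h
      exact absurd (hrmin L.length (by omega)).1 (lt_irrefl _)
    have hm1len : m - 1 < L.length := (hrmin (m-1) (by omega)).1
    have ha2 : L.getD 0 0 < 2 := h2 _ (getD_mem _ _ (by omega))
    have hpair : L.getD (m - 2) 0 = L.getD (m - 2 + 1) 0 := by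
      rw [(hrmin (m - 2) (by omega)).2, (hrmin (m - 2 + 1) (by omega)).2]
    refine ⟨m - 2, by omega, hpair, ?_⟩
    rcases Nat.lt_or_ge m 4 with h4 | h4
    · rcases (show m = 2 ∨ m = 3 by omega) with hm3 | hm3
      · -- run of length exactly 2
        subst hm3
        have hb2 : (2:ℕ) < L.length := by omega
        have hgd2 : L.getD 2 0 ≠ L.getD 0 0 := fun h => hrs ⟨hb2, h⟩
        have hlt2 : L.getD 2 0 < 2 := h2 _ (getD_mem _ _ hb2)
        refine ⟨0, ?_, ?_⟩
        · rw [length_contract _ _ (by omega)]; omega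
        · show (contract L (2-2)).getD 0 0 = (contract L (2-2)).getD (0+1) 0
          rw [show (2:ℕ) - 2 = 0 from rfl]
          have ea := contract_getD_self L 0 (by omega)
          have eb := contract_getD_succ L 0 (by omega) (by omega)
          have h02 : L.getD (0+2) 0 = L.getD 2 0 := by norm_num
          rw [ea, eb, h02]
          omega
      · -- run of length exactly 3
        subst hm3
        rcases Nat.lt_or_ge 3 L.length with hlong | hshort
        · have hgd3 : L.getD 3 0 ≠ L.getD 0 0 := fun h => hrs ⟨hlong, h⟩
          have hlt3 : L.getD 3 0 < 2 := h2 _ (getD_mem _ _ hlong)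
          have hg1 : L.getD 1 0 = L.getD 0 0 := (hrmin 1 (by omega)).2
          refine ⟨1, ?_, ?_⟩
          · rw [length_contract _ _ (by omega)]; omega
          · show (contract L (3-2)).getD 1 0 = (contract L (3-2)).getD (1+1) 0
            rw [show (3:ℕ) - 2 = 1 from rfl]
            have ea := contract_getD_self L 1 (by omega)
            have eb := contract_getD_succ L 1 (by omega) (by omega)
            have h13 : L.getD (1+2) 0 = L.getD 3 0 := by norm_num
            rw [ea, eb, h13, hg1]
            omega
        · -- L = [a,a,a] : excluded by the mod-3 condition
          exfalso
          have hlen3 : L.length = 3 := by omega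
          have hg1 : L.getD 1 0 = L.getD 0 0 := (hrmin 1 (by omega)).2
          have hg2 : L.getD 2 0 = L.getD 0 0 := (hrmin 2 (by omega)).2
          have hdrop2 : L.drop 2 = [L.getD 2 0] := by
            rw [List.drop_eq_getElem_cons (show 2 < L.length by omega),
                List.drop_eq_nil_of_le (by omega),
                ← List.getD_eq_getElem _ 0 (by omega)]
          have hL : L = [L.getD 0 0, L.getD 1 0, L.getD 2 0] := by
            have hdec := decomp L 0 (by omega)
            rw [List.take_zero, List.nil_append] at hdec
            rw [hdec]
            norm_num [hdrop2]
          obtain ⟨a, ha⟩ : ∃ a, L.getD 0 0 = a := ⟨_, rfl⟩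
          have hZval : Z L = 3 ∨ Z L = 0 := by
            by_cases h : a = 0
            · left
              rw [hL, hg1, hg2, ha]
              simp [Z, List.countP_cons, h]
            · right
              rw [hL, hg1, hg2, ha]
              simp [Z, List.countP_cons, h]
          rw [hlen3] at hm
          omega
    · -- run of length ≥ 4
      have hg1 : L.getD (0+1) 0 = L.getD 0 0 := by
        simpa using (hrmin 1 (by omega)).2
      refine ⟨0, ?_, ?_⟩
      · rw [length_contract _ _ (by omega)]; omega
      · rw [contract_getD_lt L (m-2) 0 (by omega) (by omega),
            contract_getD_lt L (m-2) (0+1) (by omega) (by omega), hg1]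
  · -- first pair at j0 ≥ 1
    refine ⟨j0, hj0lt, hj0eq, ?_⟩
    have hne : L.getD (j0 - 1) 0 ≠ L.getD j0 0 := by
      intro h
      have hmin := hj0min (j0 - 1) (by omega)
      push_neg at hmin
      have h1 : j0 - 1 + 1 = j0 := by omega
      rw [h1] at hmin
      exact absurd h (hmin (by omega))
    have hlt1 : L.getD (j0 - 1) 0 < 2 := h2 _ (getD_mem _ _ (by omega))
    have hlt2 : L.getD j0 0 < 2 := h2 _ (getD_mem _ _ (by omega))
    refine ⟨j0 - 1, ?_, ?_⟩
    · rw [length_contract _ _ hj0lt]; omega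
    · rw [contract_getD_lt _ _ _ (by omega) hj0lt,
          show j0 - 1 + 1 = j0 by omega, contract_getD_self _ _ hj0lt]
      omega


-- PART 5: realization

lemma realize : ∀ N (L : List ℕ), L.length ≤ N → (∀ d ∈ L, d < 2) →
    ((L.length - 1 + Z L) % 3 = 1) → (2 ≤ L.length → HasPair L) →
    ∃ t : BTree, P t = L := by
  intro N
  induction N with
  | zero =>
      intro L hN h2 hm hp
      obtain rfl := List.length_eq_zero_iff.mp (show L.length = 0 by omega)
      simp [Z] at hm
  | succ N ih =>
      intro L hN h2 hm hp
      rcases Nat.lt_or_ge L.length 3 with hsmall | hbig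
      · rcases (show L.length = 0 ∨ L.length = 1 ∨ L.length = 2 by omega) with h0 | h1 | hh2
        · obtain rfl := List.length_eq_zero_iff.mp h0
          simp [Z] at hm
        · obtain ⟨d, rfl⟩ := List.length_eq_one_iff.mp h1
          have hd2 : d < 2 := h2 d (by simp)
          have hZ : Z [d] = (if d = 0 then 1 else 0) := by rw [Z_cons]; simp [Z]
          rw [h1, hZ] at hm
          have hd0 : d = 0 := by by_cases h : d = 0 <;> simp [h] at hm <;> tauto
          exact ⟨.leaf, by simp [P, BTree.depths, hd0]⟩
        · obtain ⟨a, b, rfl⟩ := List.length_eq_two.mp hh2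
          obtain ⟨j, hj, he⟩ := hp (by omega)
          have hj0 : j = 0 := by simp at hj; omega
          subst hj0
          simp only [List.getD_cons_zero, List.getD_cons_succ] at he
          subst he
          have ha2 : a < 2 := h2 a (by simp)
          have hZ : Z [a, a] = (if a = 0 then 2 else 0) := by
            by_cases h : a = 0 <;> simp [Z, List.countP_cons, h]
          rw [hh2, hZ] at hm
          have ha1 : a = 1 := by by_cases h : a = 0 <;> simp [h] at hm <;> omega
          subst ha1
          exact ⟨.node .leaf .leaf, by simp [P, BTree.depths]⟩
      · obtain ⟨j, hj, he, hpc⟩ := choose L h2 hbig (hp (by omega)) hm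
        have h2' := contract_lt_two L j h2
        have hlc := length_contract L j hj
        have hm' := mod3_contract L j hj h2 he hm
        obtain ⟨t', hPt'⟩ := ih (contract L j) (by omega) h2' hm' (fun _ => hpc)
        have hnum : t'.numLeaves = L.length - 1 := by rw [← length_P, hPt', hlc]
        have hjlt : j < t'.numLeaves := by omega
        refine ⟨expandAt t' j, ?_⟩
        rw [P_expandAt t' j hjlt, hPt']
        have htake : (contract L j).take j = L.take j := by
          rw [contract, List.take_append_of_le_length (by rw [length_take_of_lt (by omega)]),
              List.take_take, min_self]
        have hdrop : (contract L j).drop (j+1) = L.drop (j+2) := by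
          rw [contract, show j + 1 = (L.take j).length + 1 by rw [length_take_of_lt (by omega)],
              List.drop_append]
          simp
        have hgd := contract_getD_self L j hj
        have hp2 : L.getD j 0 < 2 := h2 _ (getD_mem _ _ (by omega))
        rw [htake, hdrop, hgd, show 1 - (1 - L.getD j 0) = L.getD j 0 by omega]
        conv_rhs => rw [decomp L j hj]
        rw [he]
        simp

lemma sum_indicator (m : ℕ) : ∀ L : List ℕ, L.length = m →
    (∑ i : Fin m, if L.getD (i : ℕ) 0 = 0 then 1 else 0) = Z L := by
  induction m with
  | zero => intro L h; simp [List.length_eq_zero_iff.mp h, Z]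
  | succ m ih =>
      intro L h
      rcases L with _ | ⟨a, M⟩
      · simp at h
      · rw [Fin.sum_univ_succ]
        simp only [Fin.val_zero, List.getD_cons_zero, Fin.val_succ, List.getD_cons_succ]
        rw [ih M (by simpa using h), Z_cons, add_comm]

lemma ofFn_getD (L : List ℕ) {m : ℕ} (h : L.length = m) :
    List.ofFn (fun i : Fin m => L.getD (i : ℕ) 0) = L := by
  apply List.ext_getElem (by simp [h])
  intro i h1 h2
  rw [List.getElem_ofFn, List.getD_eq_getElem _ _ (by omega)]


end S19

theorem stmt19 (n : ℕ) :
    {f : (ℕ → ℤ) → ℤ | ∃ t : BTree, t.numLeaves = n + 1 ∧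
        f = fun x => t.eval x 0} =
      {f : (ℕ → ℤ) → ℤ | ∃ v : Fin (n + 1) → Fin 2, AdmissibleSeq v ∧
        f = fun x => ∑ i : Fin (n + 1), (-1) ^ (v i : ℕ) * x i} := by
  ext f
  simp only [Set.mem_setOf_eq]
  constructor
  · rintro ⟨t, htn, rfl⟩
    have hlenP : (S19.P t).length = n + 1 := by rw [S19.length_P, htn]
    have hval : ∀ i : ℕ, i < n + 1 → (S19.P t).getD i 0 < 2 := fun i hi =>
      S19.P_lt_two t _ (S19.getD_mem _ _ (by omega))
    refine ⟨fun i => ⟨(S19.P t).getD (i : ℕ) 0, hval i i.isLt⟩, ⟨?_, ?_⟩, ?_⟩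
    · intro hn
      obtain ⟨j, hj, he⟩ := S19.tree_hasPair_P t (by omega)
      rw [hlenP] at hj
      refine ⟨⟨j, by omega⟩, ?_⟩
      apply Fin.ext
      simpa using he
    · have hinv := S19.invariant t
      have hcard : (Finset.univ.filter
          (fun i : Fin (n+1) => (⟨(S19.P t).getD (i : ℕ) 0, hval i i.isLt⟩ : Fin 2) = 0)).card
          = S19.Z (S19.P t) := by
        rw [Finset.card_filter]
        have hs : (∑ i : Fin (n+1),
              if (⟨(S19.P t).getD (i : ℕ) 0, hval i i.isLt⟩ : Fin 2) = 0 then 1 else 0)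
            = ∑ i : Fin (n+1), if (S19.P t).getD (i : ℕ) 0 = 0 then 1 else 0 :=
          Finset.sum_congr rfl (fun i _ => if_congr (by simp [Fin.ext_iff]) rfl rfl)
        rw [hs]
        exact S19.sum_indicator (n+1) (S19.P t) hlenP
      rw [hcard]
      rw [htn] at hinv
      omega
    · funext x
      rw [S19.eval_eq_lsum, ← S19.lsum_mod_two, ← S19.P]
      conv_lhs => rw [← S19.ofFn_getD (S19.P t) hlenP]
      rw [S19.lsum_ofFn]
      exact Finset.sum_congr rfl (fun i _ => by simp)
  · rintro ⟨v, ⟨hpair, hmod⟩, rfl⟩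
    have hlen : (List.ofFn (fun i : Fin (n+1) => ((v i : ℕ)))).length = n + 1 :=
      List.length_ofFn
    set L := List.ofFn (fun i : Fin (n+1) => ((v i : ℕ))) with hLdef
    have h2 : ∀ d ∈ L, d < 2 := by
      intro d hd
      rw [hLdef, List.mem_ofFn] at hd
      obtain ⟨i, rfl⟩ := hd
      exact (v i).isLt
    have hgetD : ∀ i : Fin (n + 1), L.getD (i : ℕ) 0 = (v i : ℕ) := by
      intro i
      rw [hLdef, List.getD_eq_getElem _ _ (by simp; omega), List.getElem_ofFn]
    have hZ : S19.Z L = (Finset.univ.filter (fun i => v i = 0)).card := by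
      rw [Finset.card_filter]
      have hs : (∑ i : Fin (n+1), if L.getD (i : ℕ) 0 = 0 then 1 else 0)
          = ∑ i : Fin (n+1), if v i = 0 then 1 else 0 :=
        Finset.sum_congr rfl (fun i _ => if_congr (by rw [hgetD i, Fin.ext_iff]; simp) rfl rfl)
      rw [← hs, S19.sum_indicator (n+1) L hlen]
    have hm : (L.length - 1 + S19.Z L) % 3 = 1 := by
      rw [hlen, hZ]; omega
    have hp : 2 ≤ L.length → S19.HasPair L := by
      intro hL2
      obtain ⟨j, hje⟩ := hpair (by omega)
      refine ⟨(j : ℕ), by rw [hlen]; omega, ?_⟩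
      have e1 := hgetD j.castSucc
      have e2 := hgetD j.succ
      simp only [Fin.coe_castSucc, Fin.val_succ] at e1 e2
      rw [e1, e2, hje]
    obtain ⟨t, hPt⟩ := S19.realize L.length L le_rfl h2 hm hp
    refine ⟨t, ?_, ?_⟩
    · rw [← S19.length_P, hPt, hlen]
    · funext x
      rw [S19.eval_eq_lsum, ← S19.lsum_mod_two, ← S19.P, hPt, hLdef, S19.lsum_ofFn]
      exact Finset.sum_congr rfl (fun i _ => by simp)
end
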